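/- arXiv:1706.03435 — 5 statements merged into one kernel-verified Lean document; each statement's English description precedes it below -/
import Mathlib

section
/- Let G be a finite group, H a subgroup of G of order p^r * m with p not dividing m, and let g be an element of the normalizer of H in G whose order is a power of the prime p. Then the number of elements x in the coset H*g whose order is a power of p is divisible by p^r. -/
namespace CosetPP

variable {G : Type*} [Group G]

/-- The `p`-part of an element: `x ^ (b * B)` where `orderOf x = a * b`,
`a = p ^ ν_p`, and `a*A + b*B = 1`. -/
noncomputable def pPart (p : ℕ) (x : G) : G :=
  x ^ ((orderOf x / p ^ (orderOf x).factorization p : ℕ) *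
    Nat.gcdB (p ^ (orderOf x).factorization p) (orderOf x / p ^ (orderOf x).factorization p) : ℤ)

/-- The `p'`-part of an element. -/
noncomputable def cPart (p : ℕ) (x : G) : G :=
  x ^ ((p ^ (orderOf x).factorization p : ℕ) *
    Nat.gcdA (p ^ (orderOf x).factorization p) (orderOf x / p ^ (orderOf x).factorization p) : ℤ)

section basic

variable {p : ℕ} (hp : p.Prime)

include hp in
lemma bezout {n : ℕ} (hn : n ≠ 0) :
    ((p ^ n.factorization p : ℕ) : ℤ) * Nat.gcdA (p ^ n.factorization p) (n / p ^ n.factorization p)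
      + ((n / p ^ n.factorization p : ℕ) : ℤ) *
        Nat.gcdB (p ^ n.factorization p) (n / p ^ n.factorization p) = 1 := by
  have h : Nat.Coprime (p ^ n.factorization p) (n / p ^ n.factorization p) :=
    Nat.Coprime.pow_left _ (Nat.coprime_ordCompl hp hn)
  have := Nat.gcd_eq_gcd_ab (p ^ n.factorization p) (n / p ^ n.factorization p)
  rw [h] at this
  exact_mod_cast this.symm

include hp in
lemma pPart_mul_cPart (x : G) (hx : IsOfFinOrder x) : pPart p x * cPart p x = x := by
  rw [pPart, cPart, ← zpow_add]
  have hb := bezout (p := p) hp hx.orderOf_pos.ne'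
  have : (orderOf x / p ^ (orderOf x).factorization p : ℕ) *
      Nat.gcdB (p ^ (orderOf x).factorization p) (orderOf x / p ^ (orderOf x).factorization p)
      + ((p ^ (orderOf x).factorization p : ℕ) : ℤ) *
      Nat.gcdA (p ^ (orderOf x).factorization p) (orderOf x / p ^ (orderOf x).factorization p) = 1 := by
    omega
  rw [this, zpow_one]

lemma commute_pPart_cPart (p : ℕ) (x : G) : Commute (pPart p x) (cPart p x) :=
  (Commute.refl x).zpow_zpow _ _

lemma zpow_helper (x : G) (a b : ℕ) (B : ℤ) (hab : x ^ (a * b) = 1) :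
    (x ^ ((b : ℤ) * B)) ^ a = 1 := by
  rw [← zpow_natCast, ← zpow_mul]
  have : (b : ℤ) * B * a = ((a * b : ℕ) : ℤ) * B := by push_cast; ring
  rw [this, zpow_mul, zpow_natCast, hab, one_zpow]

lemma pPart_orderOf_dvd (p : ℕ) (x : G) (hx : IsOfFinOrder x) :
    orderOf (pPart p x) ∣ p ^ (orderOf x).factorization p := by
  rw [orderOf_dvd_iff_pow_eq_one, pPart]
  refine zpow_helper x _ _ _ ?_
  rw [Nat.ordProj_mul_ordCompl_eq_self (orderOf x) p, pow_orderOf_eq_one]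

lemma pPart_isP (p : ℕ) (hp : p.Prime) (x : G) (hx : IsOfFinOrder x) :
    ∃ k, orderOf (pPart p x) = p ^ k :=
  (Nat.dvd_prime_pow hp).mp (pPart_orderOf_dvd p x hx) |>.imp fun _ h => h.2

lemma cPart_orderOf_dvd (p : ℕ) (x : G) :
    orderOf (cPart p x) ∣ orderOf x / p ^ (orderOf x).factorization p := by
  rw [orderOf_dvd_iff_pow_eq_one, cPart]
  refine zpow_helper x _ _ _ ?_
  rw [Nat.mul_comm, Nat.ordProj_mul_ordCompl_eq_self (orderOf x) p, pow_orderOf_eq_one]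

include hp in
lemma cPart_not_dvd (x : G) (hx : IsOfFinOrder x) : ¬ p ∣ orderOf (cPart p x) := fun hdvd =>
  Nat.not_dvd_ordCompl hp hx.orderOf_pos.ne' (hdvd.trans (cPart_orderOf_dvd p x))

end basic

end CosetPP

namespace Part2

variable {G : Type*} [Group G] {p : ℕ}

lemma bezout' {a b : ℕ} (h : Nat.Coprime a b) :
    (a : ℤ) * Nat.gcdA a b + (b : ℤ) * Nat.gcdB a b = 1 := by
  have := Nat.gcd_eq_gcd_ab a b
  rw [h] at this
  exact_mod_cast this.symm

lemma decomp_unique (hp : p.Prime) {u y : G} (h : Commute u y) {k : ℕ}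
    (hu : orderOf u = p ^ k) (hy0 : orderOf y ≠ 0) (hy : ¬ p ∣ orderOf y) :
    CosetPP.cPart p (u * y) = y ∧ CosetPP.pPart p (u * y) = u := by
  have hu0 : orderOf u ≠ 0 := by rw [hu]; exact (pow_pos hp.pos k).ne'
  have hcop : (orderOf u).Coprime (orderOf y) := by
    rw [hu]; exact Nat.Coprime.pow_left _ ((Nat.Prime.coprime_iff_not_dvd hp).mpr hy)
  have hord : orderOf (u * y) = p ^ k * orderOf y := by
    rw [h.orderOf_mul_eq_mul_orderOf_of_coprime hcop, hu]
  have hn0 : orderOf (u * y) ≠ 0 := by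
    rw [hord]; exact Nat.mul_ne_zero (pow_pos hp.pos k).ne' hy0
  have hfin : IsOfFinOrder (u * y) := by
    rw [← orderOf_pos_iff]; omega
  have hfack : (orderOf (u * y)).factorization p = k := by
    rw [hord, Nat.factorization_mul (pow_pos hp.pos k).ne' hy0]
    simp [hp.factorization_pow, Nat.factorization_eq_zero_of_not_dvd hy]
  have hdiv : orderOf (u * y) / p ^ k = orderOf y := by
    rw [hord, Nat.mul_div_cancel_left _ (pow_pos hp.pos k)]
  have hc : CosetPP.cPart p (u * y) = y := by
    rw [CosetPP.cPart, hfack, hdiv, h.mul_zpow]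
    have h1 : u ^ ((p ^ k : ℕ) * Nat.gcdA (p ^ k) (orderOf y) : ℤ) = 1 := by
      rw [zpow_mul, zpow_natCast, ← hu, pow_orderOf_eq_one, one_zpow]
    have hcop' : Nat.Coprime (p ^ k) (orderOf y) := by rw [← hu]; exact hcop
    have hbz := bezout' hcop'
    have h2 : y ^ ((p ^ k : ℕ) * Nat.gcdA (p ^ k) (orderOf y) : ℤ) = y := by
      have he : ((p ^ k : ℕ) : ℤ) * Nat.gcdA (p ^ k) (orderOf y)
          = 1 - (orderOf y : ℤ) * Nat.gcdB (p ^ k) (orderOf y) := by omega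
      rw [he, zpow_sub, zpow_one, zpow_mul, zpow_natCast, pow_orderOf_eq_one, one_zpow,
        inv_one, mul_one]
    rw [h1, h2, one_mul]
  refine ⟨hc, ?_⟩
  have := CosetPP.pPart_mul_cPart hp (u * y) hfin
  rw [hc] at this
  exact mul_right_cancel (this.trans rfl)

lemma cPart_eq_one_of_pelt (hp : p.Prime) {x : G} {k : ℕ} (hx : orderOf x = p ^ k) :
    CosetPP.cPart p x = 1 := by
  have := decomp_unique hp (Commute.one_right x) hx (by simp) (by simp [Nat.dvd_one, hp.ne_one])
  simpa using this.1

lemma pelt_of_cPart_eq_one (hp : p.Prime) {x : G} (hfin : IsOfFinOrder x)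
    (hc : CosetPP.cPart p x = 1) : ∃ k, orderOf x = p ^ k := by
  have hd := CosetPP.pPart_orderOf_dvd p x hfin
  have := CosetPP.pPart_mul_cPart hp x hfin
  rw [hc, mul_one] at this
  rw [← this]
  exact ((Nat.dvd_prime_pow hp).mp hd).imp fun _ h => h.2

lemma map_cPart_eq_one {M : Type*} [Group M] (hp : p.Prime) (f : G →* M) {x : G}
    (hx : orderOf x ≠ 0) {j : ℕ} (hfx : orderOf (f x) = p ^ j) :
    f (CosetPP.cPart p x) = 1 := by
  rw [CosetPP.cPart, map_zpow]
  have hdvd : orderOf (f x) ∣ p ^ (orderOf x).factorization p := by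
    have h1 : orderOf (f x) ∣ orderOf x := orderOf_map_dvd f x
    rw [← Nat.ordProj_mul_ordCompl_eq_self (orderOf x) p] at h1
    rw [hfx] at h1 ⊢
    exact (Nat.Coprime.dvd_of_dvd_mul_right
      (Nat.Coprime.pow_left _ (Nat.coprime_ordCompl hp hx)) h1)
  have h2 : f x ^ ((p ^ (orderOf x).factorization p : ℕ) : ℤ) = 1 := by
    rw [zpow_natCast]; exact orderOf_dvd_iff_pow_eq_one.mp hdvd
  rw [zpow_mul, h2, one_zpow]

lemma coe_cPart (H : Subgroup G) (x : H) :
    ((CosetPP.cPart p x : H) : G) = CosetPP.cPart p (x : G) := by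
  rw [CosetPP.cPart, CosetPP.cPart, orderOf_submonoid x]
  push_cast
  ring

lemma pelt_mul (hp : p.Prime) {x y : G} (h : Commute x y)
    (hx : ∃ k, orderOf x = p ^ k) (hy : ∃ k, orderOf y = p ^ k) :
    ∃ k, orderOf (x * y) = p ^ k := by
  obtain ⟨k, hk⟩ := hx; obtain ⟨l, hl⟩ := hy
  have : orderOf (x * y) ∣ p ^ (k + l) := by
    refine h.orderOf_mul_dvd_lcm.trans ?_
    rw [pow_add, hk, hl]
    exact Nat.lcm_dvd_mul _ _
  exact ((Nat.dvd_prime_pow hp).mp this).imp fun _ h => h.2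

lemma orderOf_conj' (x h : G) : orderOf (h * x * h⁻¹) = orderOf x :=
  orderOf_injective (MulAut.conj h).toMonoidHom (MulAut.conj h).injective x

end Part2

namespace Main

open CosetPP Part2

variable {G : Type*} [Group G] [Fintype G] {p : ℕ}

lemma orderOf_ne_zero' (x : G) : orderOf x ≠ 0 := (orderOf_pos x).ne'

lemma cPart_mem (hp : p.Prime) (H : Subgroup G) {g x : G} (hg : g ∈ Subgroup.normalizer (H : Set G))
    {κ : ℕ} (hgord : orderOf g = p ^ κ) (hx : x * g⁻¹ ∈ H) : CosetPP.cPart p x ∈ H := by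
  have hxN : x ∈ Subgroup.normalizer (H : Set G) := by
    have hx2 : x = (x * g⁻¹) * g := by group
    rw [hx2]; exact mul_mem (Subgroup.le_normalizer hx) hg
  set N := Subgroup.normalizer (H : Set G) with hN
  haveI : (H.subgroupOf N).Normal := Subgroup.normal_in_normalizer
  set φ := QuotientGroup.mk' (H.subgroupOf N) with hφ
  have hquot : φ ⟨x, hxN⟩ = φ ⟨g, hg⟩ := by
    rw [QuotientGroup.mk'_eq_mk']
    refine ⟨(⟨x, hxN⟩ : N)⁻¹ * ⟨g, hg⟩, ?_, ?_⟩
    · rw [Subgroup.mem_subgroupOf]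
      show x⁻¹ * g ∈ H
      have := (Subgroup.mem_normalizer_iff'' ).mp hg (x * g⁻¹)⁻¹ |>.mp (inv_mem hx)
      simpa [mul_assoc] using this
    · exact mul_inv_cancel_left _ _
  have hordg : orderOf (φ ⟨g, hg⟩) ∣ p ^ κ := by
    have h1 : orderOf (φ (⟨g, hg⟩ : N)) ∣ orderOf (⟨g, hg⟩ : N) := orderOf_map_dvd φ _
    rwa [Subgroup.orderOf_mk, hgord] at h1
  obtain ⟨j, -, hj⟩ := (Nat.dvd_prime_pow hp).mp (hquot ▸ hordg)
  have h1 : φ (CosetPP.cPart p (⟨x, hxN⟩ : N)) = 1 := by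
    refine map_cPart_eq_one hp φ ?_ hj
    rw [Subgroup.orderOf_mk]
    exact orderOf_ne_zero' x
  have h2 : CosetPP.cPart p (⟨x, hxN⟩ : N) ∈ H.subgroupOf N := by
    rwa [← QuotientGroup.ker_mk' (H.subgroupOf N), MonoidHom.mem_ker]
  have h3 := (Subgroup.mem_subgroupOf).mp h2
  rwa [coe_cPart] at h3

end Main

namespace Main

open CosetPP Part2 Finset
open scoped Classical

variable {G : Type*} [Group G] [Fintype G]

/-- number of p-elements in the coset `Hg` commuting with `y` -/
noncomputable def Tfun (p : ℕ) (H : Subgroup G) (g : G) (y : G) : ℕ :=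
  (Finset.univ.filter fun u : G => u * g⁻¹ ∈ H ∧ (∃ k, orderOf u = p ^ k) ∧ u * y = y * u).card

noncomputable def Scard (p : ℕ) (H : Subgroup G) (g : G) : ℕ :=
  (Finset.univ.filter fun u : G => u * g⁻¹ ∈ H ∧ (∃ k, orderOf u = p ^ k)).card

section coset

variable {p : ℕ} {H : Subgroup G} {g : G}

lemma norm_conj (hg : g ∈ Subgroup.normalizer (H : Set G)) {h : G} (hh : h ∈ H) : g * h * g⁻¹ ∈ H :=
  (Subgroup.mem_normalizer_iff.mp hg h).mp hh

lemma cos_mul_right (hg : g ∈ Subgroup.normalizer (H : Set G)) {x y : G} (hx : x * g⁻¹ ∈ H) (hy : y ∈ H) :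
    (x * y) * g⁻¹ ∈ H := by
  have h2 : x * y * g⁻¹ = (x * g⁻¹) * (g * y * g⁻¹) := by group
  rw [h2]; exact mul_mem hx (norm_conj hg hy)

lemma cos_div {x y : G} (hx : x * g⁻¹ ∈ H) (hy : y * g⁻¹ ∈ H) : x * y⁻¹ ∈ H := by
  have h2 : x * y⁻¹ = (x * g⁻¹) * (y * g⁻¹)⁻¹ := by group
  rw [h2]; exact mul_mem hx (inv_mem hy)

lemma cos_conj (hg : g ∈ Subgroup.normalizer (H : Set G)) {h x : G} (hh : h ∈ H) (hx : x * g⁻¹ ∈ H) :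
    (h * x * h⁻¹) * g⁻¹ ∈ H := by
  have h2 : h * x * h⁻¹ * g⁻¹ = h * (x * g⁻¹) * (g * h⁻¹ * g⁻¹) := by group
  rw [h2]; exact mul_mem (mul_mem hh hx) (norm_conj hg (inv_mem hh))

lemma card_coset : (Finset.univ.filter fun x : G => x * g⁻¹ ∈ H).card = Nat.card H := by
  rw [Nat.card_eq_fintype_card, Fintype.card_subtype]
  apply Finset.card_bij (i := fun x _ => x * g⁻¹)
  · intro x hx
    simp only [Finset.mem_filter, Finset.mem_univ, true_and] at hx ⊢
    exact hx
  · intro x1 h1 x2 h2 heq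
    exact mul_right_cancel heq
  · intro h hh
    simp only [Finset.mem_filter, Finset.mem_univ, true_and] at hh
    exact ⟨h * g, by simp only [Finset.mem_filter, Finset.mem_univ, true_and,
      mul_inv_cancel_right]; exact hh, by simp⟩

lemma fiber_card (hp : p.Prime) (hg : g ∈ Subgroup.normalizer (H : Set G)) {y : G}
    (hyH : y ∈ H) (hyp : ¬ p ∣ orderOf y) :
    ((Finset.univ.filter fun x : G => x * g⁻¹ ∈ H).filter
        fun x => CosetPP.cPart p x = y).card = Tfun p H g y := by
  rw [Tfun]
  apply Finset.card_bij (i := fun x _ => CosetPP.pPart p x)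
  · intro x hx
    simp only [Finset.mem_filter, Finset.mem_univ, true_and] at hx ⊢
    obtain ⟨hxcos, hxc⟩ := hx
    have hdecomp := pPart_mul_cPart hp x (isOfFinOrder_of_finite x)
    have hpxy : CosetPP.pPart p x = x * y⁻¹ := by
      rw [← hxc]; exact eq_mul_inv_of_mul_eq hdecomp
    refine ⟨?_, pPart_isP p hp x (isOfFinOrder_of_finite x), ?_⟩
    · rw [hpxy]; exact cos_mul_right hg hxcos (inv_mem hyH)
    · have h3 := commute_pPart_cPart p x
      rw [hxc] at h3
      exact h3
  · intro x1 h1 x2 h2 heq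
    simp only [Finset.mem_filter, Finset.mem_univ, true_and] at h1 h2
    have e1 := pPart_mul_cPart hp x1 (isOfFinOrder_of_finite x1)
    have e2 := pPart_mul_cPart hp x2 (isOfFinOrder_of_finite x2)
    rw [← e1, ← e2, h1.2, h2.2, heq]
  · intro u hu
    simp only [Finset.mem_filter, Finset.mem_univ, true_and] at hu
    obtain ⟨hucos, ⟨k, huk⟩, hucomm⟩ := hu
    have hcom : Commute u y := hucomm
    have hdu := decomp_unique hp hcom huk (orderOf_ne_zero' y) hyp
    refine ⟨u * y, ?_, hdu.2⟩
    simp only [Finset.mem_filter, Finset.mem_univ, true_and]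
    exact ⟨cos_mul_right hg hucos hyH, hdu.1⟩

lemma card_H_eq_sum (hp : p.Prime) (hg : g ∈ Subgroup.normalizer (H : Set G)) {κ : ℕ} (hgord : orderOf g = p ^ κ) :
    Nat.card H = ∑ y ∈ Finset.univ.filter (fun y : G => y ∈ H ∧ ¬ p ∣ orderOf y),
      Tfun p H g y := by
  rw [← card_coset (g := g)]
  rw [Finset.card_eq_sum_card_fiberwise (f := fun x => CosetPP.cPart p x)
    (t := Finset.univ.filter (fun y : G => y ∈ H ∧ ¬ p ∣ orderOf y))]
  · refine Finset.sum_congr rfl fun y hy => ?_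
    simp only [Finset.mem_filter, Finset.mem_univ, true_and] at hy
    exact fiber_card hp hg hy.1 hy.2
  · intro x hx
    simp only [Finset.mem_filter, Finset.mem_univ, true_and] at hx ⊢
    exact Finset.mem_filter.mpr ⟨Finset.mem_univ _, cPart_mem hp H hg hgord (Finset.mem_filter.mp (Finset.mem_coe.mp hx)).2, cPart_not_dvd hp x (isOfFinOrder_of_finite x)⟩

end coset

end Main

namespace Main

open CosetPP Part2 Finset
open scoped Classical

variable {G : Type*} [Group G] [Fintype G] {p : ℕ} {H : Subgroup G} {g : G}

lemma Tfun_central {y : G} (hyc : (∀ h ∈ H, y * h = h * y) ∧ y * g = g * y) :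
    Tfun p H g y = Scard p H g := by
  rw [Tfun, Scard]
  congr 1
  apply Finset.filter_congr
  intro u _
  constructor
  · rintro ⟨a, b, -⟩; exact ⟨a, b⟩
  · rintro ⟨a, b⟩
    refine ⟨a, b, ?_⟩
    have c1 : Commute y (u * g⁻¹) := (hyc.1 _ a)
    have c2 : Commute y g := hyc.2
    have c3 : Commute y u := by
      have := (c1.mul_right c2)
      simpa [inv_mul_cancel_right, mul_assoc] using this
    exact c3.symm

lemma card_Yc_not_dvd (hp : p.Prime) :
    ¬ p ∣ ((Finset.univ.filter (fun y : G => y ∈ H ∧ ¬ p ∣ orderOf y)).filter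
      (fun y => (∀ h ∈ H, y * h = h * y) ∧ y * g = g * y)).card := by
  set W : Subgroup G :=
    { carrier := {y : G | (y ∈ H ∧ ¬ p ∣ orderOf y) ∧ (∀ h ∈ H, y * h = h * y) ∧ y * g = g * y}
      one_mem' := ⟨⟨one_mem H, by simp [Nat.dvd_one, hp.ne_one]⟩, fun h _ => by simp, by simp⟩
      mul_mem' := by
        rintro a b ⟨⟨haH, hap⟩, hac, hag⟩ ⟨⟨hbH, hbp⟩, hbc, hbg⟩
        refine ⟨⟨mul_mem haH hbH, fun hdvd => ?_⟩, fun h hh => ?_, ?_⟩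
        · have hcom : Commute a b := hac b hbH
          have h1 : p ∣ orderOf a * orderOf b :=
            (hdvd.trans hcom.orderOf_mul_dvd_lcm).trans (Nat.lcm_dvd_mul _ _)
          rcases (Nat.Prime.dvd_mul hp).mp h1 with h2 | h2
          exacts [hap h2, hbp h2]
        · exact ((Commute.mul_left (hac h hh) (hbc h hh)) : (a * b) * h = h * (a * b))
        · exact ((Commute.mul_left hag hbg) : (a * b) * g = g * (a * b))
      inv_mem' := by
        rintro a ⟨⟨haH, hap⟩, hac, hag⟩
        refine ⟨⟨inv_mem haH, by rwa [orderOf_inv]⟩, fun h hh => ?_, ?_⟩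
        · exact ((Commute.inv_left (hac h hh)) : a⁻¹ * h = h * a⁻¹)
        · exact ((Commute.inv_left hag) : a⁻¹ * g = g * a⁻¹) }
  intro hdvd
  have hcardeq : ((Finset.univ.filter (fun y : G => y ∈ H ∧ ¬ p ∣ orderOf y)).filter
      (fun y => (∀ h ∈ H, y * h = h * y) ∧ y * g = g * y)).card = Nat.card ↥W := by
    rw [Nat.card_eq_fintype_card, Fintype.card_subtype, Finset.filter_filter]
    apply Finset.card_bij (i := fun y _ => y)
    · intro y hy
      simp only [Finset.mem_filter, Finset.mem_univ, true_and] at hy ⊢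
      exact hy
    · intro a _ b _ h; exact h
    · intro y hy
      simp only [Finset.mem_filter, Finset.mem_univ, true_and] at hy ⊢
      exact ⟨y, hy, rfl⟩
  rw [hcardeq, Nat.card_eq_fintype_card] at hdvd
  haveI := Fact.mk hp
  obtain ⟨w, hw⟩ := exists_prime_orderOf_dvd_card p hdvd
  have h2 : orderOf (w : G) = p := by rw [Subgroup.orderOf_coe, hw]
  exact w.2.1.2 (h2 ▸ dvd_refl p)

lemma Tfun_conj (hg : g ∈ Subgroup.normalizer (H : Set G)) {h : G} (hh : h ∈ H) (y : G) :
    Tfun p H g (h * y * h⁻¹) = Tfun p H g y := by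
  rw [Tfun, Tfun]
  apply Finset.card_bij (i := fun u _ => h⁻¹ * u * h)
  · intro u hu
    simp only [Finset.mem_filter, Finset.mem_univ, true_and] at hu ⊢
    obtain ⟨hcos, hpelt, hcomm⟩ := hu
    refine ⟨?_, ?_, ?_⟩
    · have := cos_conj hg (inv_mem hh) hcos
      simpa [inv_inv] using this
    · obtain ⟨k, hk⟩ := hpelt
      exact ⟨k, by rw [show h⁻¹ * u * h = h⁻¹ * u * h⁻¹⁻¹ by rw [inv_inv], orderOf_conj', hk]⟩
    · calc (h⁻¹ * u * h) * y = h⁻¹ * (u * (h * y * h⁻¹)) * h := by group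
        _ = h⁻¹ * ((h * y * h⁻¹) * u) * h := by rw [hcomm]
        _ = y * (h⁻¹ * u * h) := by group
  · intro a _ b _ heq
    have : h * (h⁻¹ * a * h) * h⁻¹ = h * (h⁻¹ * b * h) * h⁻¹ := by rw [heq]
    simpa [mul_assoc] using this
  · intro v hv
    simp only [Finset.mem_filter, Finset.mem_univ, true_and] at hv ⊢
    obtain ⟨hcos, hpelt, hcomm⟩ := hv
    refine ⟨h * v * h⁻¹, ⟨?_, ?_, ?_⟩, by group⟩
    · exact cos_conj hg hh hcos
    · obtain ⟨k, hk⟩ := hpelt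
      exact ⟨k, by rw [orderOf_conj', hk]⟩
    · calc (h * v * h⁻¹) * (h * y * h⁻¹) = h * (v * y) * h⁻¹ := by group
        _ = h * (y * v) * h⁻¹ := by rw [hcomm]
        _ = (h * y * h⁻¹) * (h * v * h⁻¹) := by group

lemma orbit_stab (y₀ : G) (H : Subgroup G) :
    (Finset.image (fun h : ↥H => (h : G) * y₀ * (h : G)⁻¹) Finset.univ).card *
      Nat.card ↥(H ⊓ Subgroup.centralizer {y₀}) = Nat.card H := by
  classical
  set O := Finset.image (fun h : ↥H => (h : G) * y₀ * (h : G)⁻¹) Finset.univ with hO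
  have hstab : (Finset.univ.filter fun k : ↥H => (k : G) * y₀ * (k : G)⁻¹ = y₀).card
      = Nat.card ↥(H ⊓ Subgroup.centralizer {y₀}) := by
    rw [Nat.card_eq_fintype_card, Fintype.card_subtype]
    refine Finset.card_bij (fun k _ => (k : G)) ?_ ?_ ?_
    · intro k hk
      simp only [Finset.mem_filter, Finset.mem_univ, true_and] at hk ⊢
      refine Subgroup.mem_inf.mpr ⟨k.2, Subgroup.mem_centralizer_singleton_iff.mpr ?_⟩
      have : (k : G) * y₀ * (k : G)⁻¹ * (k : G) = y₀ * k := by rw [hk]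
      simpa [mul_assoc] using this
    · intro a _ b _ h; exact Subtype.ext h
    · intro x hx
      simp only [Finset.mem_filter, Finset.mem_univ, true_and] at hx
      obtain ⟨hxH, hxc⟩ := Subgroup.mem_inf.mp hx
      refine ⟨⟨x, hxH⟩, ?_, rfl⟩
      simp only [Finset.mem_filter, Finset.mem_univ, true_and]
      have := Subgroup.mem_centralizer_singleton_iff.mp hxc
      calc x * y₀ * x⁻¹ = (x * y₀) * x⁻¹ := by rw [mul_assoc]
        _ = (y₀ * x) * x⁻¹ := by rw [this]
        _ = y₀ := by group
  have h1 : Fintype.card ↥H = ∑ z ∈ O, (Finset.univ.filter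
      fun h : ↥H => (h : G) * y₀ * (h : G)⁻¹ = z).card :=
    Finset.card_eq_sum_card_fiberwise (fun h _ => Finset.mem_image_of_mem _ (Finset.mem_univ h))
  have h2 : ∀ z ∈ O, (Finset.univ.filter fun h : ↥H => (h : G) * y₀ * (h : G)⁻¹ = z).card
      = Nat.card ↥(H ⊓ Subgroup.centralizer {y₀}) := by
    intro z hz
    obtain ⟨h₀, -, h₀eq⟩ := Finset.mem_image.mp hz
    rw [← hstab]
    apply Finset.card_bij (i := fun k _ => h₀⁻¹ * k)
    · intro k hk
      simp only [Finset.mem_filter, Finset.mem_univ, true_and] at hk ⊢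
      push_cast
      calc (h₀ : G)⁻¹ * k * y₀ * ((h₀ : G)⁻¹ * k)⁻¹
          = (h₀ : G)⁻¹ * ((k : G) * y₀ * (k : G)⁻¹) * h₀ := by group
        _ = (h₀ : G)⁻¹ * z * h₀ := by rw [hk]
        _ = (h₀ : G)⁻¹ * ((h₀ : G) * y₀ * (h₀ : G)⁻¹) * h₀ := by rw [h₀eq]
        _ = y₀ := by group
    · intro a _ b _ heq
      have : h₀ * (h₀⁻¹ * a) = h₀ * (h₀⁻¹ * b) := by rw [heq]
      simpa [mul_assoc] using this
    · intro j hj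
      simp only [Finset.mem_filter, Finset.mem_univ, true_and] at hj ⊢
      refine ⟨h₀ * j, ?_, by group⟩
      push_cast
      calc (h₀ : G) * j * y₀ * ((h₀ : G) * j)⁻¹
          = (h₀ : G) * ((j : G) * y₀ * (j : G)⁻¹) * (h₀ : G)⁻¹ := by group
        _ = (h₀ : G) * y₀ * (h₀ : G)⁻¹ := by rw [hj]
        _ = z := h₀eq
  rw [Finset.sum_congr rfl h2, Finset.sum_const, smul_eq_mul] at h1
  rw [Nat.card_eq_fintype_card (α := ↥H)]
  exact h1.symm

end Main

namespace Main

open CosetPP Part2 Finset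
open scoped Classical

variable {G : Type*} [Group G] [Fintype G]

theorem main_dvd (p : ℕ) (hp : p.Prime) :
    ∀ (n : ℕ) (H : Subgroup G) (g : G),
      Fintype.card ↥(H ⊔ Subgroup.zpowers g) ≤ n → g ∈ Subgroup.normalizer (H : Set G) →
      (∃ κ, orderOf g = p ^ κ) →
      p ^ ((Nat.card H).factorization p) ∣ Scard p H g := by
  intro n
  induction n using Nat.strongRecOn with
  | ind n IH =>
  intro H g hle hg hgord
  obtain ⟨κ, hκ⟩ := hgord
  set r := (Nat.card ↥H).factorization p with hr
  have hsum := card_H_eq_sum (G := G) hp hg hκ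
  set Y := Finset.univ.filter (fun y : G => y ∈ H ∧ ¬ p ∣ orderOf y) with hY
  set Cc : G → Prop := fun y => (∀ h ∈ H, y * h = h * y) ∧ y * g = g * y with hCc
  have hsplit : ∑ y ∈ Y, Tfun p H g y
      = ∑ y ∈ Y.filter Cc, Tfun p H g y + ∑ y ∈ Y.filter (fun y => ¬ Cc y), Tfun p H g y :=
    (Finset.sum_filter_add_sum_filter_not Y Cc _).symm
  have hc1 : ∑ y ∈ Y.filter Cc, Tfun p H g y = (Y.filter Cc).card * Scard p H g := by
    rw [Finset.sum_congr rfl (fun y hy => Tfun_central (Finset.mem_filter.mp hy).2),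
      Finset.sum_const, smul_eq_mul]
  -- x₀ normalizes H₁ = H ⊓ C(y₀)
  have hx₀facts : ∀ y₀ x₀ : G, x₀ * g⁻¹ ∈ H → x₀ * y₀ = y₀ * x₀ →
      x₀ ∈ Subgroup.normalizer ((H ⊓ Subgroup.centralizer {y₀} : Subgroup G) : Set G) := by
    intro y₀ x₀ hx₀cos hx₀comm
    have c1 : Commute x₀ y₀ := hx₀comm
    have hx₀N : x₀ ∈ Subgroup.normalizer (H : Set G) := by
      rw [show x₀ = (x₀ * g⁻¹) * g by group]
      exact mul_mem (Subgroup.le_normalizer hx₀cos) hg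
    have hx₀H := Subgroup.mem_normalizer_iff.mp hx₀N
    rw [Subgroup.mem_normalizer_iff]
    intro z
    constructor
    · intro hz
      obtain ⟨hzH, hzC⟩ := Subgroup.mem_inf.mp hz
      refine Subgroup.mem_inf.mpr ⟨(hx₀H z).mp hzH, ?_⟩
      rw [Subgroup.mem_centralizer_singleton_iff]
      have c2 : Commute z y₀ := Subgroup.mem_centralizer_singleton_iff.mp hzC
      exact (c1.mul_left c2).mul_left c1.inv_left
    · intro hz
      obtain ⟨hzH, hzC⟩ := Subgroup.mem_inf.mp hz
      refine Subgroup.mem_inf.mpr ⟨(hx₀H z).mpr hzH, ?_⟩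
      rw [Subgroup.mem_centralizer_singleton_iff]
      have cC : Commute (x₀ * z * x₀⁻¹) y₀ := Subgroup.mem_centralizer_singleton_iff.mp hzC
      have c3 : Commute (x₀⁻¹ * (x₀ * z * x₀⁻¹) * x₀) y₀ := (c1.inv_left.mul_left cC).mul_left c1
      have hzz : x₀⁻¹ * (x₀ * z * x₀⁻¹) * x₀ = z := by group
      rwa [hzz] at c3
  -- the key finset induction for the non-central part
  have key : ∀ (m : ℕ) (Z : Finset G), Z.card ≤ m →
      (∀ y ∈ Z, (y ∈ H ∧ ¬ p ∣ orderOf y) ∧ ¬ Cc y) →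
      (∀ y ∈ Z, ∀ h ∈ H, h * y * h⁻¹ ∈ Z) →
      p ^ r ∣ ∑ y ∈ Z, Tfun p H g y := by
    intro m
    induction m with
    | zero =>
      intro Z hZ _ _
      rw [Finset.card_eq_zero.mp (Nat.le_zero.mp hZ)]
      simp
    | succ m ihm =>
      intro Z hZle hZmem hZinv
      rcases Z.eq_empty_or_nonempty with rfl | ⟨y₀, hy₀⟩
      · simp
      set O := Finset.image (fun h : ↥H => (h : G) * y₀ * (h : G)⁻¹) Finset.univ with hO
      have hy₀O : y₀ ∈ O := Finset.mem_image.mpr ⟨1, Finset.mem_univ 1, by simp⟩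
      have hOZ : O ⊆ Z := by
        intro z hz
        obtain ⟨h, -, rfl⟩ := Finset.mem_image.mp hz
        exact hZinv y₀ hy₀ h h.2
      have hOinv : ∀ z ∈ O, ∀ h ∈ H, h * z * h⁻¹ ∈ O := by
        intro z hz h hh
        obtain ⟨k, -, rfl⟩ := Finset.mem_image.mp hz
        refine Finset.mem_image.mpr ⟨⟨h, hh⟩ * k, Finset.mem_univ _, ?_⟩
        push_cast
        group
      have hsd : ∑ y ∈ Z, Tfun p H g y
          = ∑ y ∈ Z \ O, Tfun p H g y + ∑ y ∈ O, Tfun p H g y := (Finset.sum_sdiff hOZ).symm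
      rw [hsd]
      refine dvd_add ?_ ?_
      · refine ihm (Z \ O) ?_ (fun y hy => hZmem y (Finset.mem_sdiff.mp hy).1) ?_
        · have h1 : (Z \ O).card = Z.card - O.card := Finset.card_sdiff_of_subset hOZ
          have h2 : 0 < O.card := Finset.card_pos.mpr ⟨y₀, hy₀O⟩
          omega
        · intro y hy h hh
          have h1 := Finset.mem_sdiff.mp hy
          refine Finset.mem_sdiff.mpr ⟨hZinv y h1.1 h hh, fun hcon => h1.2 ?_⟩
          have h3 := hOinv _ hcon h⁻¹ (inv_mem hh)
          have h4 : h⁻¹ * (h * y * h⁻¹) * h⁻¹⁻¹ = y := by group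
          rwa [h4] at h3
      · -- orbit part
        have hconst : ∀ z ∈ O, Tfun p H g z = Tfun p H g y₀ := by
          intro z hz
          obtain ⟨h, -, rfl⟩ := Finset.mem_image.mp hz
          exact Tfun_conj hg h.2 y₀
        rw [Finset.sum_congr rfl hconst, Finset.sum_const, smul_eq_mul]
        by_cases hT0 : Tfun p H g y₀ = 0
        · rw [hT0, Nat.mul_zero]
          exact dvd_zero _
        have hTpos : (Finset.univ.filter fun u : G =>
            u * g⁻¹ ∈ H ∧ (∃ k, orderOf u = p ^ k) ∧ u * y₀ = y₀ * u).Nonempty := by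
          rw [← Finset.card_pos]
          rw [Tfun] at hT0
          omega
        obtain ⟨x₀, hx₀⟩ := hTpos
        simp only [Finset.mem_filter, Finset.mem_univ, true_and] at hx₀
        obtain ⟨hx₀cos, hx₀p, hx₀comm⟩ := hx₀
        set H₁ := H ⊓ Subgroup.centralizer {y₀} with hH₁
        have hx₀N : x₀ ∈ Subgroup.normalizer (H₁ : Set G) := hx₀facts y₀ x₀ hx₀cos hx₀comm
        have hx₀K : x₀ ∈ H ⊔ Subgroup.zpowers g := by
          rw [show x₀ = (x₀ * g⁻¹) * g by group]
          exact mul_mem ((le_sup_left : H ≤ _) hx₀cos)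
            ((le_sup_right : Subgroup.zpowers g ≤ _) (Subgroup.mem_zpowers g))
        have hKle : H₁ ⊔ Subgroup.zpowers x₀ ≤ H ⊔ Subgroup.zpowers g :=
          sup_le (inf_le_left.trans le_sup_left) (Subgroup.zpowers_le.mpr hx₀K)
        have hKcent : H₁ ⊔ Subgroup.zpowers x₀ ≤ Subgroup.centralizer {y₀} :=
          sup_le inf_le_right (Subgroup.zpowers_le.mpr
            (Subgroup.mem_centralizer_singleton_iff.mpr hx₀comm))
        have hne : ¬ (H ⊔ Subgroup.zpowers g ≤ H₁ ⊔ Subgroup.zpowers x₀) := by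
          intro hcontra
          have hcc : Cc y₀ := by
            constructor
            · intro h hh
              have := hKcent (hcontra ((le_sup_left : H ≤ _) hh))
              exact (Subgroup.mem_centralizer_singleton_iff.mp this).symm
            · have := hKcent (hcontra ((le_sup_right : Subgroup.zpowers g ≤ _)
                (Subgroup.mem_zpowers g)))
              exact (Subgroup.mem_centralizer_singleton_iff.mp this).symm
          exact (hZmem y₀ hy₀).2 hcc
        obtain ⟨w, hw1, hw2⟩ := SetLike.not_le_iff_exists.mp hne
        have hmeas : Fintype.card ↥(H₁ ⊔ Subgroup.zpowers x₀) < n := by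
          refine lt_of_lt_of_le ?_ hle
          refine Fintype.card_lt_of_injective_of_notMem
            (Subgroup.inclusion hKle) (Subgroup.inclusion_injective hKle) (b := ⟨w, hw1⟩) ?_
          rintro ⟨⟨v, hv⟩, hveq⟩
          apply hw2
          have : w = v := by
            have := congrArg Subtype.val hveq
            exact this.symm
          rw [this]
          exact hv
        have hIH := IH _ hmeas H₁ x₀ le_rfl hx₀N hx₀p
        -- identify Scard p H₁ x₀ with Tfun p H g y₀
        have hTT : Scard p H₁ x₀ = Tfun p H g y₀ := by
          rw [Scard, Tfun]
          congr 1
          apply Finset.filter_congr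
          intro u _
          constructor
          · rintro ⟨hcos1, hp1⟩
            obtain ⟨hHm, hCm⟩ := Subgroup.mem_inf.mp hcos1
            refine ⟨?_, hp1, ?_⟩
            · have : u * g⁻¹ = (u * x₀⁻¹) * (x₀ * g⁻¹) := by group
              rw [this]
              exact mul_mem hHm hx₀cos
            · have c2 : Commute (u * x₀⁻¹) y₀ := Subgroup.mem_centralizer_singleton_iff.mp hCm
              have cx : Commute x₀ y₀ := hx₀comm
              have c3 : Commute ((u * x₀⁻¹) * x₀) y₀ := c2.mul_left cx
              have : (u * x₀⁻¹) * x₀ = u := by group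
              rwa [this] at c3
          · rintro ⟨hcosu, hpu, hcommu⟩
            refine ⟨Subgroup.mem_inf.mpr ⟨cos_div hcosu hx₀cos, ?_⟩, hpu⟩
            rw [Subgroup.mem_centralizer_singleton_iff]
            have cu : Commute u y₀ := hcommu
            have cx : Commute x₀ y₀ := hx₀comm
            exact cu.mul_left cx.inv_left
        rw [hTT] at hIH
        -- arithmetic
        have hOS := orbit_stab y₀ H
        have hO0 : O.card ≠ 0 := Finset.card_pos.mpr ⟨y₀, hy₀O⟩ |>.ne'
        have hH₁0 : Nat.card ↥H₁ ≠ 0 := Nat.card_pos.ne'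
        have hfac : r = (O.card).factorization p + (Nat.card ↥H₁).factorization p := by
          rw [hr, ← hOS, Nat.factorization_mul hO0 hH₁0]
          simp
        rw [hfac, pow_add]
        exact mul_dvd_mul (Nat.ordProj_dvd _ p) hIH
  -- final assembly
  have hnc := key ((Y.filter (fun y => ¬ Cc y)).card) (Y.filter (fun y => ¬ Cc y)) le_rfl
    (fun y hy => by
      simp only [hY, Finset.mem_filter, Finset.mem_univ, true_and] at hy
      exact ⟨hy.1, hy.2⟩)
    (fun y hy h hh => by
      simp only [hY, Finset.mem_filter, Finset.mem_univ, true_and] at hy ⊢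
      obtain ⟨⟨hyH, hyp⟩, hyc⟩ := hy
      refine ⟨⟨mul_mem (mul_mem hh hyH) (inv_mem hh), ?_⟩, ?_⟩
      · rw [orderOf_conj']
        exact hyp
      · intro hcon
        apply hyc
        have h2 : (h * y * h⁻¹) * h = h * (h * y * h⁻¹) := hcon.1 h hh
        have h5 : h * y = h * (h * y * h⁻¹) := by rw [← h2]; group
        have h6 : y = h * y * h⁻¹ := mul_left_cancel h5
        rwa [← h6] at hcon)
  have hrd : p ^ r ∣ Nat.card ↥H := Nat.ordProj_dvd _ p
  have h7 : p ^ r ∣ (Y.filter Cc).card * Scard p H g := by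
    have heq : (Y.filter Cc).card * Scard p H g
        = Nat.card ↥H - ∑ y ∈ Y.filter (fun y => ¬ Cc y), Tfun p H g y := by
      omega
    rw [heq]
    exact Nat.dvd_sub hrd hnc
  have hcop : Nat.Coprime (p ^ r) (Y.filter Cc).card :=
    Nat.Coprime.pow_left _ ((hp.coprime_iff_not_dvd).mpr (card_Yc_not_dvd hp))
  exact hcop.dvd_of_dvd_mul_left h7

end Main

theorem card_ppower_order_in_coset' (G : Type*) [Group G] [Fintype G]
    (p : ℕ) (hp : p.Prime) (H : Subgroup G) (r m : ℕ)
    (hcard : Nat.card H = p ^ r * m) (hm : ¬ p ∣ m)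
    (g : G) (hg : g ∈ Subgroup.normalizer (H : Set G)) (hgord : ∃ k, orderOf g = p ^ k) :
    p ^ r ∣ Nat.card {x : G // (∃ h ∈ H, x = h * g) ∧ ∃ k, orderOf x = p ^ k} := by
  classical
  have hm0 : m ≠ 0 := by
    intro h
    rw [h, Nat.mul_zero] at hcard
    exact Nat.card_pos.ne' hcard
  have hfact : (Nat.card ↥H).factorization p = r := by
    rw [hcard, Nat.factorization_mul (pow_ne_zero r hp.pos.ne') hm0]
    simp [hp.factorization_pow, Nat.factorization_eq_zero_of_not_dvd hm]
  have hmain := Main.main_dvd p hp (Fintype.card ↥(H ⊔ Subgroup.zpowers g)) H g le_rfl hg hgord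
  rw [hfact] at hmain
  have hcardeq : Nat.card {x : G // (∃ h ∈ H, x = h * g) ∧ ∃ k, orderOf x = p ^ k}
      = Main.Scard p H g := by
    rw [Main.Scard, Nat.card_eq_fintype_card, Fintype.card_subtype]
    congr 1
    apply Finset.filter_congr
    intro x _
    constructor
    · rintro ⟨⟨h, hh, rfl⟩, hp2⟩
      exact ⟨by simpa using hh, hp2⟩
    · rintro ⟨hcos, hp2⟩
      exact ⟨⟨x * g⁻¹, hcos, by group⟩, hp2⟩
  rw [hcardeq]
  exact hmain


/-- Let `G` be a finite group, `H` a subgroup of order `p^r * m` with `p ∤ m`, and let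
`g` be an element of the normalizer of `H` whose order is a power of the prime `p`.
Then the number of elements of the coset `H * g` of `p`-power order is divisible by `p^r`. -/
theorem card_ppower_order_in_coset (G : Type*) [Group G] [Fintype G]
    (p : ℕ) (hp : p.Prime) (H : Subgroup G) (r m : ℕ)
    (hcard : Nat.card H = p ^ r * m) (hm : ¬ p ∣ m)
    (g : G) (hg : g ∈ Subgroup.normalizer (H : Set G)) (hgord : ∃ k, orderOf g = p ^ k) :
    p ^ r ∣ Nat.card {x : G // (∃ h ∈ H, x = h * g) ∧ ∃ k, orderOf x = p ^ k} :=
  card_ppower_order_in_coset' G p hp H r m hcard hm g hg hgord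
end

section
/- Let G be a finite group, p a prime, φ : Γ → G a homomorphism from a group Γ, and suppose g ∈ G has p-power order and g^{-1} φ(γ) g = φ(σ(γ)) for all γ ∈ Γ, where σ is a fixed automorphism of Γ. Then the set of x ∈ G satisfying the same two conditions (p-power order and x^{-1} φ(γ) x = φ(σ(γ)) for all γ) is exactly {x ∈ C g : |x| is a power of p}, where C is the centralizer of the image of φ in G; in particular its cardinality is divisible by the p-part of |C|. -/
universe u
open Subgroup Finset


open Subgroup

section decomp
variable {G : Type*} [Group G] (p : ℕ)

/-- exponent used to extract the p'-part of an element -/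
noncomputable def pcExp (x : G) : ℕ :=
  (p ^ (orderOf x).factorization p) ^ Nat.totient (ordCompl[p] (orderOf x))

/-- the p'-part of an element -/
noncomputable def pcPart (x : G) : G := x ^ pcExp p x

/-- the p-part of an element -/
noncomputable def ppPart (x : G) : G := x * (pcPart p x)⁻¹

variable {p}

lemma ppPart_mul_pcPart (x : G) : ppPart p x * pcPart p x = x := by
  simp [ppPart]

lemma commute_pcPart (x : G) : Commute x (pcPart p x) := (Commute.refl x).pow_right _

lemma commute_ppPart_pcPart (x : G) : Commute (ppPart p x) (pcPart p x) :=
  ((commute_pcPart x).symm.mul_right (Commute.refl _).inv_right).symm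

section
variable (hp : p.Prime) {x : G} (hx : orderOf x ≠ 0)
include hp hx

lemma ordProj_dvd_pcExp : ordProj[p] (orderOf x) ∣ pcExp p x := by
  apply dvd_pow_self
  have : 0 < ordCompl[p] (orderOf x) := Nat.ordCompl_pos p hx
  exact (Nat.totient_pos.2 this).ne'

lemma pcExp_modEq : pcExp p x ≡ 1 [MOD ordCompl[p] (orderOf x)] := by
  refine Nat.ModEq.pow_totient ?_
  exact Nat.Coprime.pow_left _ (Nat.coprime_ordCompl hp hx)

lemma orderOf_pcPart_dvd : orderOf (pcPart p x) ∣ ordCompl[p] (orderOf x) := by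
  rw [orderOf_dvd_iff_pow_eq_one, pcPart, ← pow_mul, ← orderOf_dvd_iff_pow_eq_one]
  calc orderOf x = ordProj[p] (orderOf x) * ordCompl[p] (orderOf x) :=
        (Nat.ordProj_mul_ordCompl_eq_self _ _).symm
    _ ∣ pcExp p x * ordCompl[p] (orderOf x) :=
        mul_dvd_mul_right (ordProj_dvd_pcExp hp hx) _

lemma coprime_orderOf_pcPart : p.Coprime (orderOf (pcPart p x)) :=
  (Nat.coprime_ordCompl hp hx).coprime_dvd_right (orderOf_pcPart_dvd hp hx)

lemma orderOf_ppPart_dvd : orderOf (ppPart p x) ∣ ordProj[p] (orderOf x) := by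
  rw [orderOf_dvd_iff_pow_eq_one, ppPart,
    (commute_pcPart x).inv_right.mul_pow, pcPart, inv_pow, ← pow_mul,
    mul_inv_eq_one, pow_eq_pow_iff_modEq]
  have h1 : pcExp p x * ordProj[p] (orderOf x) ≡ 1 * ordProj[p] (orderOf x)
      [MOD ordCompl[p] (orderOf x) * ordProj[p] (orderOf x)] :=
    Nat.ModEq.mul_right' _ (pcExp_modEq hp hx)
  rw [one_mul] at h1
  have h2 : ordCompl[p] (orderOf x) * ordProj[p] (orderOf x) = orderOf x := by
    rw [mul_comm]; exact Nat.ordProj_mul_ordCompl_eq_self _ _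
  rw [h2] at h1
  exact h1.symm

lemma exists_orderOf_ppPart : ∃ k, orderOf (ppPart p x) = p ^ k := by
  obtain ⟨k, -, hk⟩ := (Nat.dvd_prime_pow hp).1 (orderOf_ppPart_dvd hp hx)
  exact ⟨k, hk⟩

end

/-- recombination: the canonical decomposition of a product of a commuting
p-element and p'-element recovers the factors. -/
lemma pcPart_mul {a b : G} (hp : p.Prime) (h : Commute a b)
    (ha : ∃ j, orderOf a = p ^ j) (ha0 : orderOf a ≠ 0) (hb0 : orderOf b ≠ 0)
    (hb : p.Coprime (orderOf b)) : pcPart p (a * b) = b := by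
  obtain ⟨j, hj⟩ := ha
  have hco : (orderOf a).Coprime (orderOf b) := by rw [hj]; exact hb.pow_left _
  have hn : orderOf (a * b) = p ^ j * orderOf b := by
    rw [← hj]; exact h.orderOf_mul_eq_mul_orderOf_of_coprime hco
  have hfac : (orderOf (a * b)).factorization p = j := by
    rw [hn, Nat.factorization_mul (pow_ne_zero _ hp.pos.ne') hb0, Finsupp.add_apply,
      hp.factorization_pow, Finsupp.single_eq_same,
      Nat.factorization_eq_zero_of_not_dvd (hp.coprime_iff_not_dvd.1 hb), add_zero]
  have hproj : ordProj[p] (orderOf (a * b)) = p ^ j := by rw [hfac]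
  have hcompl : ordCompl[p] (orderOf (a * b)) = orderOf b := by
    rw [hproj, hn, Nat.mul_div_cancel_left _ (pow_pos hp.pos _)]
  have hn0 : orderOf (a * b) ≠ 0 := by
    rw [hn]
    exact Nat.mul_ne_zero (pow_ne_zero _ hp.pos.ne') hb0
  have hdvd : orderOf a ∣ pcExp p (a * b) := by
    rw [hj, ← hproj]; exact ordProj_dvd_pcExp hp hn0
  have hmod : pcExp p (a * b) ≡ 1 [MOD orderOf b] := by
    rw [← hcompl]; exact pcExp_modEq hp hn0
  rw [pcPart, h.mul_pow, orderOf_dvd_iff_pow_eq_one.1 hdvd, one_mul,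
    pow_eq_pow_iff_modEq.2 hmod, pow_one]

lemma ppPart_mul {a b : G} (hp : p.Prime) (h : Commute a b)
    (ha : ∃ j, orderOf a = p ^ j) (ha0 : orderOf a ≠ 0) (hb0 : orderOf b ≠ 0)
    (hb : p.Coprime (orderOf b)) : ppPart p (a * b) = a := by
  rw [ppPart, pcPart_mul hp h ha ha0 hb0 hb, mul_inv_cancel_right]

end decomp

section core

variable {p : ℕ}

theorem pcoset_core (hp : p.Prime) :
    ∀ N : ℕ, ∀ (K : Type u) [Group K] [Fintype K], Fintype.card K ≤ N →
      ∀ (H : Subgroup K), H.Normal → (∀ k : K, ∃ j : ℕ, k ^ p ^ j ∈ H) → ∀ g : K,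
      p ^ padicValNat p (Nat.card H) ∣
        Nat.card {x : K // x * g⁻¹ ∈ H ∧ ∃ k, orderOf x = p ^ k} := by
  intro N
  induction N with
  | zero =>
    intro K _ _ hcard
    exact absurd hcard (by simpa using Fintype.card_pos)
  | succ N IH =>

    intro K _ _ hcard H hnorm hq g
    classical
    haveI : Fact p.Prime := ⟨hp⟩
    haveI := hnorm
    have horder : ∀ x : K, orderOf x ≠ 0 := fun x => (orderOf_pos x).ne'
    set pElt : K → Prop := fun x => ∃ k, orderOf x = p ^ k with hpElt
    set S : Finset K := univ.filter fun x => x * g⁻¹ ∈ H ∧ pElt x with hS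
    set Y0 : Finset K := univ.filter (fun y => y ∈ H ∧ p.Coprime (orderOf y)) with hY0
    set Cos : Finset K := univ.filter (fun k => k * g⁻¹ ∈ H) with hCos
    set Sy : K → Finset K :=
      fun y => univ.filter fun x => x * g⁻¹ ∈ H ∧ pElt x ∧ x * y = y * x with hSy
    -- goal reduction
    have hgoal : Nat.card {x : K // x * g⁻¹ ∈ H ∧ pElt x} = S.card := by
      rw [Nat.card_eq_fintype_card]
      exact Fintype.card_of_subtype _ (by simp [hS])
    rw [hgoal]
    set r := padicValNat p (Nat.card H) with hr
    -- Step A : the coset has the same cardinality as H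
    have hA : Nat.card H = Cos.card := by
      have h1 : Nat.card H = (univ.filter (fun x => x ∈ H)).card := by
        rw [Nat.card_eq_fintype_card]
        exact Fintype.card_of_subtype _ (by simp)
      rw [h1]
      refine card_nbij' (fun x => x * g) (fun k => k * g⁻¹) ?_ ?_ ?_ ?_ <;>
        simp [hCos, Set.MapsTo, Set.RightInvOn, Set.LeftInvOn]
    -- the p'-part of an element of the coset lies in H
    have hpc_mem : ∀ k : K, pcPart p k ∈ H := by
      intro k
      obtain ⟨j, hj⟩ := hq k
      have h1 : ((k : K ⧸ H) : K ⧸ H) ^ p ^ j = 1 := by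
        rw [← QuotientGroup.mk_pow, QuotientGroup.eq_one_iff]
        exact hj
      have h2 : orderOf ((k : K ⧸ H)) ∣ p ^ j := orderOf_dvd_of_pow_eq_one h1
      obtain ⟨i, -, hi⟩ := (Nat.dvd_prime_pow hp).1 h2
      have h3 : orderOf ((k : K ⧸ H)) ∣ orderOf k :=
        orderOf_map_dvd (QuotientGroup.mk' H) k
      have h4 : (p ^ i).Coprime (ordCompl[p] (orderOf k)) :=
        Nat.Coprime.pow_left _ (Nat.coprime_ordCompl hp (horder k))
      have h5 : orderOf ((k : K ⧸ H)) ∣ ordProj[p] (orderOf k) := by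
        rw [hi] at h3 ⊢
        refine h4.dvd_of_dvd_mul_right ?_
        rwa [Nat.ordProj_mul_ordCompl_eq_self]
      have h6 : orderOf ((k : K ⧸ H)) ∣ pcExp p k :=
        h5.trans (ordProj_dvd_pcExp hp (horder k))
      have h7 : ((pcPart p k : K) : K ⧸ H) = 1 := by
        rw [pcPart, QuotientGroup.mk_pow]
        exact orderOf_dvd_iff_pow_eq_one.1 h6
      exact (QuotientGroup.eq_one_iff _).1 h7
    -- Step B : fiberwise count over the p'-part
    have hB : Cos.card = ∑ y ∈ Y0, (Cos.filter fun k => pcPart p k = y).card := by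
      refine card_eq_sum_card_fiberwise (fun k hk => ?_)
      simp only [hY0, Finset.mem_coe, mem_filter, mem_univ, true_and]
      exact ⟨hpc_mem k, coprime_orderOf_pcPart hp (horder k)⟩
    -- Step C : each fiber has the same cardinality as Sy y
    have hC : ∀ y ∈ Y0, (Cos.filter fun k => pcPart p k = y).card = (Sy y).card := by
      intro y hy
      simp only [hY0, mem_filter, mem_univ, true_and] at hy
      obtain ⟨hyH, hyco⟩ := hy
      refine card_nbij' (fun k => ppPart p k) (fun x => x * y) ?_ ?_ ?_ ?_
      · intro k hk
        simp only [Finset.mem_coe, mem_filter, mem_univ, true_and, hCos] at hk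
        obtain ⟨hkH, hkpc⟩ := hk
        simp only [hSy, Finset.mem_coe, mem_filter, mem_univ, true_and]
        refine ⟨?_, ?_, ?_⟩
        · have : ppPart p k * g⁻¹ = (k * g⁻¹) * (g * y⁻¹ * g⁻¹) := by
            rw [ppPart, hkpc]; group
          rw [this]
          exact mul_mem hkH (hnorm.conj_mem _ (inv_mem hyH) g)
        · exact exists_orderOf_ppPart hp (horder k)
        · have := commute_ppPart_pcPart (p := p) k
          rw [hkpc] at this
          exact this
      · intro x hx
        simp only [hSy, Finset.mem_coe, mem_filter, mem_univ, true_and] at hx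
        obtain ⟨hxH, hxp, hxy⟩ := hx
        simp only [Finset.mem_coe, mem_filter, mem_univ, true_and, hCos]
        constructor
        · have : x * y * g⁻¹ = (x * g⁻¹) * (g * y * g⁻¹) := by group
          rw [this]
          exact mul_mem hxH (hnorm.conj_mem _ hyH g)
        · exact pcPart_mul hp hxy hxp (horder x) (horder y) hyco
      · intro k hk
        simp only [Finset.mem_coe, mem_filter, mem_univ, true_and, hCos] at hk
        show ppPart p k * y = k
        rw [ppPart, hk.2]
        group
      · intro x hx
        simp only [hSy, Finset.mem_coe, mem_filter, mem_univ, true_and] at hx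
        obtain ⟨hxH, hxp, hxy⟩ := hx
        exact ppPart_mul hp hxy hxp (horder x) (horder y) hyco
    -- split off the central part
    have hsplit : ∑ y ∈ Y0, (Sy y).card =
        (∑ y ∈ Y0.filter (fun y => y ∈ Subgroup.center K), (Sy y).card) +
        (∑ y ∈ Y0.filter (fun y => y ∉ Subgroup.center K), (Sy y).card) :=
      (sum_filter_add_sum_filter_not Y0 _ _).symm
    have hcentral : ∀ y ∈ Y0.filter (fun y => y ∈ Subgroup.center K),
        (Sy y).card = S.card := by
      intro y hy
      simp only [mem_filter] at hy
      congr 1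
      ext x
      simp only [hSy, hS, mem_filter, mem_univ, true_and]
      constructor
      · rintro ⟨h1, h2, -⟩; exact ⟨h1, h2⟩
      · rintro ⟨h1, h2⟩
        exact ⟨h1, h2, Subgroup.mem_center_iff.1 hy.2 x⟩
    set Zc : Finset K := Y0.filter (fun y => y ∈ Subgroup.center K) with hZcdef
    set Ync : Finset K := Y0.filter (fun y => y ∉ Subgroup.center K) with hYnc
    -- Step E : the number of central p'-elements of H is coprime to p
    have hz' : ¬ p ∣ Zc.card := by
      set Z' : Subgroup K :=
        { carrier := {y : K | (y ∈ H ∧ p.Coprime (orderOf y)) ∧ y ∈ Subgroup.center K}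
          one_mem' := ⟨⟨one_mem H, by simp⟩, one_mem _⟩
          mul_mem' := by
            rintro a b ⟨⟨haH, hac⟩, haz⟩ ⟨⟨hbH, hbc⟩, hbz⟩
            refine ⟨⟨mul_mem haH hbH, ?_⟩, mul_mem haz hbz⟩
            have hcomm : Commute a b := (Subgroup.mem_center_iff.1 haz b).symm
            exact Nat.Coprime.coprime_dvd_right hcomm.orderOf_mul_dvd_mul_orderOf
              (hac.mul_right hbc)
          inv_mem' := by
            rintro a ⟨⟨haH, hac⟩, haz⟩
            exact ⟨⟨inv_mem haH, by rwa [orderOf_inv]⟩, inv_mem haz⟩ } with hZ'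
      have hmemZ' : ∀ y : K, y ∈ Z' ↔ ((y ∈ H ∧ p.Coprime (orderOf y)) ∧ y ∈ Subgroup.center K) :=
        fun y => Iff.rfl
      have hcardZ : Zc.card = Fintype.card ↥Z' := by
        rw [Fintype.card_of_subtype (univ.filter (fun y => y ∈ Z')) (by simp)]
        congr 1
        ext y
        simp only [hZcdef, hY0, mem_filter, mem_univ, true_and, hmemZ']
        try tauto
      intro hdvd
      rw [hcardZ] at hdvd
      obtain ⟨u, hu⟩ := exists_prime_orderOf_dvd_card (G := ↥Z') p hdvd
      have hco : p.Coprime (orderOf (u : K)) := ((hmemZ' _).1 u.2).1.2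
      rw [orderOf_coe, hu] at hco
      exact hp.one_lt.ne' (by simpa [Nat.Coprime, Nat.gcd_self] using hco)
    -- Step F1 : fibers over noncentral elements
    have hF1 : ∀ y : K, y ∉ Subgroup.center K →
        p ^ padicValNat p (Nat.card ↥(H ⊓ Subgroup.centralizer {y})) ∣ (Sy y).card := by
      intro y hyc
      rcases (Sy y).eq_empty_or_nonempty with he | ⟨c, hc⟩
      · rw [he]; exact dvd_zero _
      simp only [hSy, mem_filter, mem_univ, true_and] at hc
      obtain ⟨hcH, hcp, hcy⟩ := hc
      set Cz := Subgroup.centralizer {y} with hCzdef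
      have hcCz : c ∈ Cz := Subgroup.mem_centralizer_iff.2 (by
        intro z hz
        rw [Set.mem_singleton_iff] at hz
        subst hz
        exact hcy.symm)
      set K' : Subgroup K := (H ⊓ Cz) ⊔ Subgroup.zpowers c with hK'def
      have hK'le : K' ≤ Cz := sup_le inf_le_right (zpowers_le.2 hcCz)
      have hcK' : c ∈ K' := (le_sup_right : Subgroup.zpowers c ≤ K') (mem_zpowers c)
      have hHC : H ⊓ Cz ≤ K' := le_sup_left
      obtain ⟨w, hw⟩ : ∃ w : K, ¬ w * y = y * w := by
        by_contra hall
        push_neg at hall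
        exact hyc (Subgroup.mem_center_iff.2 fun z => hall z)
      have hwCz : w ∉ Cz := by
        intro hwz
        exact hw (Subgroup.mem_centralizer_iff.1 hwz y (Set.mem_singleton y)).symm
      have hltCz : Fintype.card ↥Cz < Fintype.card K := by
        refine Fintype.card_lt_of_injective_of_notMem _ Subtype.coe_injective (b := w) ?_
        rw [Subtype.range_coe_subtype]
        exact hwCz
      have hleK' : Fintype.card ↥K' ≤ Fintype.card ↥Cz :=
        Fintype.card_le_of_injective _ (Subgroup.inclusion_injective hK'le)
      have hcard' : Fintype.card ↥K' ≤ N := by omega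
      have hnorm' : ((H ⊓ Cz).subgroupOf K').Normal := by
        constructor
        intro n hn k
        rw [Subgroup.mem_subgroupOf] at hn ⊢
        obtain ⟨hn1, hn2⟩ := Subgroup.mem_inf.1 hn
        have hcoe : ((k * n * k⁻¹ : ↥K') : K) = (k : K) * (n : K) * (k : K)⁻¹ := by
          push_cast; rfl
        rw [hcoe]
        exact Subgroup.mem_inf.2 ⟨hnorm.conj_mem _ hn1 _,
          mul_mem (mul_mem (hK'le k.2) hn2) (inv_mem (hK'le k.2))⟩
      have hq' : ∀ k : ↥K', ∃ j : ℕ, k ^ p ^ j ∈ (H ⊓ Cz).subgroupOf K' := by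
        intro k
        obtain ⟨j, hj⟩ := hq (k : K)
        refine ⟨j, ?_⟩
        rw [Subgroup.mem_subgroupOf]
        have hcoe : ((k ^ p ^ j : ↥K') : K) = (k : K) ^ p ^ j := by push_cast; rfl
        rw [hcoe]
        exact Subgroup.mem_inf.2 ⟨hj, pow_mem (hK'le k.2) _⟩
      have hIH := IH ↥K' hcard' ((H ⊓ Cz).subgroupOf K') hnorm' hq' ⟨c, hcK'⟩
      have hcard1 : Nat.card ↥((H ⊓ Cz).subgroupOf K') = Nat.card ↥(H ⊓ Cz) :=
        Nat.card_congr (Subgroup.subgroupOfEquivOfLe hHC).toEquiv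
      have hSyK' : ∀ x ∈ Sy y, x ∈ K' := by
        intro x hx
        simp only [hSy, mem_filter, mem_univ, true_and] at hx
        obtain ⟨h1, h2, h3⟩ := hx
        have hxCz : x ∈ Cz := Subgroup.mem_centralizer_iff.2 (by
          intro z hz
          rw [Set.mem_singleton_iff] at hz
          subst hz
          exact h3.symm)
        have hxc : x * c⁻¹ ∈ H ⊓ Cz := by
          refine Subgroup.mem_inf.2 ⟨?_, mul_mem hxCz (inv_mem hcCz)⟩
          have : x * c⁻¹ = (x * g⁻¹) * (c * g⁻¹)⁻¹ := by group
          rw [this]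
          exact mul_mem h1 (inv_mem hcH)
        have := mul_mem (hHC hxc) hcK'
        simpa using this
      have hcard2 : Nat.card {x : ↥K' //
          x * (⟨c, hcK'⟩ : ↥K')⁻¹ ∈ (H ⊓ Cz).subgroupOf K' ∧ ∃ j, orderOf x = p ^ j} =
          (Sy y).card := by
        rw [Nat.card_eq_fintype_card, Fintype.card_of_subtype
          (univ.filter (fun x : ↥K' =>
            x * (⟨c, hcK'⟩ : ↥K')⁻¹ ∈ (H ⊓ Cz).subgroupOf K' ∧ ∃ j, orderOf x = p ^ j))
          (by simp)]
        refine card_bij' (fun a _ => (a : K)) (fun x hx => ⟨x, hSyK' x hx⟩) ?_ ?_ ?_ ?_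
        · intro a ha
          simp only [mem_filter, mem_univ, true_and] at ha
          obtain ⟨ha1, ha2⟩ := ha
          rw [Subgroup.mem_subgroupOf] at ha1
          have hcoe : ((a * (⟨c, hcK'⟩ : ↥K')⁻¹ : ↥K') : K) = (a : K) * c⁻¹ := by
            push_cast; rfl
          rw [hcoe] at ha1
          obtain ⟨hb1, hb2⟩ := Subgroup.mem_inf.1 ha1
          simp only [hSy, mem_filter, mem_univ, true_and]
          refine ⟨?_, ?_, ?_⟩
          · have : (a : K) * g⁻¹ = ((a : K) * c⁻¹) * (c * g⁻¹) := by group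
            rw [this]
            exact mul_mem hb1 hcH
          · obtain ⟨j, hj⟩ := ha2
            exact ⟨j, by rw [← hj, orderOf_coe]⟩
          · exact (Subgroup.mem_centralizer_iff.1 (hK'le a.2) y (Set.mem_singleton y)).symm
        · intro x hx
          simp only [mem_filter, mem_univ, true_and]
          simp only [hSy, mem_filter, mem_univ, true_and] at hx
          obtain ⟨h1, h2, h3⟩ := hx
          constructor
          · rw [Subgroup.mem_subgroupOf]
            have hcoe : (((⟨x, hSyK' x (by simp [hSy, h1, h2, h3])⟩ : ↥K') *
                (⟨c, hcK'⟩ : ↥K')⁻¹ : ↥K') : K) = x * c⁻¹ := by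
              push_cast; rfl
            rw [hcoe]
            have hxCz : x ∈ Cz := Subgroup.mem_centralizer_iff.2 (by
              intro z hz
              rw [Set.mem_singleton_iff] at hz
              subst hz
              exact h3.symm)
            refine Subgroup.mem_inf.2 ⟨?_, mul_mem hxCz (inv_mem hcCz)⟩
            have : x * c⁻¹ = (x * g⁻¹) * (c * g⁻¹)⁻¹ := by group
            rw [this]
            exact mul_mem h1 (inv_mem hcH)
          · obtain ⟨j, hj⟩ := h2
            exact ⟨j, by rw [orderOf_mk, hj]⟩
        · intro a _
          rfl
        · intro x _
          rfl
      rw [hcard1, hcard2] at hIH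
      exact hIH
    -- conjugation invariance facts
    have hconj_orderOf : ∀ (h y : K), orderOf (h * y * h⁻¹) = orderOf y := by
      intro h y
      have := orderOf_injective ((MulAut.conj h) : K ≃* K).toMonoidHom
        (MulEquiv.injective _) y
      simpa [MulAut.conj_apply] using this
    have hSy_conj : ∀ (h : ↥H) (y : K), (Sy ((h : K) * y * (h : K)⁻¹)).card = (Sy y).card := by
      intro h y
      refine card_nbij' (fun x => (h : K)⁻¹ * x * (h : K))
        (fun x => (h : K) * x * (h : K)⁻¹) ?_ ?_ ?_ ?_
      · intro x hx
        simp only [hSy, Finset.mem_coe, mem_filter, mem_univ, true_and] at hx ⊢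
        obtain ⟨h1, h2, h3⟩ := hx
        refine ⟨?_, ?_, ?_⟩
        · have : (h : K)⁻¹ * x * (h : K) * g⁻¹ =
              (h : K)⁻¹ * (x * g⁻¹) * (g * (h : K) * g⁻¹) := by group
          rw [this]
          exact mul_mem (mul_mem (inv_mem h.2) h1) (hnorm.conj_mem _ h.2 g)
        · obtain ⟨j, hj⟩ := h2
          refine ⟨j, ?_⟩
          have : (h : K)⁻¹ * x * (h : K) = (h : K)⁻¹ * x * ((h : K)⁻¹)⁻¹ := by group
          rw [this, hconj_orderOf, hj]
        · calc (h : K)⁻¹ * x * (h : K) * y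
              = (h : K)⁻¹ * (x * ((h : K) * y * (h : K)⁻¹)) * (h : K) := by group
            _ = (h : K)⁻¹ * (((h : K) * y * (h : K)⁻¹) * x) * (h : K) := by rw [h3]
            _ = y * ((h : K)⁻¹ * x * (h : K)) := by group
      · intro x hx
        simp only [hSy, Finset.mem_coe, mem_filter, mem_univ, true_and] at hx ⊢
        obtain ⟨h1, h2, h3⟩ := hx
        refine ⟨?_, ?_, ?_⟩
        · have : (h : K) * x * (h : K)⁻¹ * g⁻¹ =
              (h : K) * (x * g⁻¹) * (g * (h : K)⁻¹ * g⁻¹) := by group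
          rw [this]
          exact mul_mem (mul_mem h.2 h1) (hnorm.conj_mem _ (inv_mem h.2) g)
        · obtain ⟨j, hj⟩ := h2
          exact ⟨j, by rw [hconj_orderOf, hj]⟩
        · calc (h : K) * x * (h : K)⁻¹ * ((h : K) * y * (h : K)⁻¹)
              = (h : K) * (x * y) * (h : K)⁻¹ := by group
            _ = (h : K) * (y * x) * (h : K)⁻¹ := by rw [h3]
            _ = (h : K) * y * (h : K)⁻¹ * ((h : K) * x * (h : K)⁻¹) := by group
      · intro x _
        group
      · intro x _
        group
    -- the orbit of y under conjugation by H
    set orb : K → Finset K :=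
      fun y => (univ : Finset ↥H).image (fun (h : ↥H) => (h : K) * y * (h : K)⁻¹) with horbdef
    have horb_self : ∀ y : K, y ∈ orb y := by
      intro y
      simp only [horbdef, mem_image, mem_univ, true_and]
      exact ⟨1, by simp⟩
    have horb_eq : ∀ (h : ↥H) (y : K), orb ((h : K) * y * (h : K)⁻¹) = orb y := by
      intro h y
      ext z
      simp only [horbdef, mem_image, mem_univ, true_and]
      constructor
      · rintro ⟨h', rfl⟩
        refine ⟨h' * h, ?_⟩
        push_cast
        group
      · rintro ⟨h', rfl⟩
        refine ⟨h' * h⁻¹, ?_⟩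
        push_cast
        group
    -- orbit-stabilizer
    have hos : ∀ y : K, (orb y).card * Nat.card ↥(H ⊓ Subgroup.centralizer {y}) =
        Nat.card ↥H := by
      intro y
      set f : ↥H → K := fun h => (h : K) * y * (h : K)⁻¹ with hfdef
      have h1 : (univ : Finset ↥H).card =
          ∑ b ∈ univ.image f, (univ.filter fun a => f a = b).card :=
        card_eq_sum_card_image f univ
      have h2 : ∀ b ∈ univ.image f,
          (univ.filter fun a => f a = b).card =
            Nat.card ↥(H ⊓ Subgroup.centralizer {y}) := by
        intro b hb
        obtain ⟨h0, -, rfl⟩ := mem_image.1 hb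
        rw [Nat.card_eq_fintype_card, ← card_univ]
        have hstab : ∀ a : ↥H, f a = f h0 →
            (h0 : K)⁻¹ * (a : K) ∈ H ⊓ Subgroup.centralizer {y} := by
          intro a ha
          simp only [hfdef] at ha
          refine Subgroup.mem_inf.2 ⟨mul_mem (inv_mem h0.2) a.2, ?_⟩
          refine Subgroup.mem_centralizer_iff.2 ?_
          intro z hz
          rw [Set.mem_singleton_iff] at hz
          rw [hz]
          calc y * ((h0 : K)⁻¹ * (a : K))
              = (h0 : K)⁻¹ * (((h0 : K) * y * (h0 : K)⁻¹) * (a : K)) := by group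
            _ = (h0 : K)⁻¹ * (((a : K) * y * (a : K)⁻¹) * (a : K)) := by rw [ha]
            _ = (h0 : K)⁻¹ * (a : K) * y := by group
        refine card_bij' (fun a ha => (⟨(h0 : K)⁻¹ * (a : K),
            hstab a (mem_filter.1 ha).2⟩ : ↥(H ⊓ Subgroup.centralizer {y})))
          (fun cc _ => ((h0 * ⟨(cc : K), (Subgroup.mem_inf.1 cc.2).1⟩ : ↥H))) ?_ ?_ ?_ ?_
        · intro a ha
          exact mem_univ _
        · intro cc _
          simp only [mem_filter, mem_univ, true_and, hfdef]
          have hccy : (cc : K) * y = y * (cc : K) :=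
            (Subgroup.mem_centralizer_iff.1 (Subgroup.mem_inf.1 cc.2).2 y
              (Set.mem_singleton y)).symm
          have hcoe : ((h0 * ⟨(cc : K), (Subgroup.mem_inf.1 cc.2).1⟩ : ↥H) : K) =
              (h0 : K) * (cc : K) := rfl
          rw [hcoe]
          calc (h0 : K) * (cc : K) * y * ((h0 : K) * (cc : K))⁻¹
              = (h0 : K) * ((cc : K) * y * (cc : K)⁻¹) * (h0 : K)⁻¹ := by group
            _ = (h0 : K) * y * (h0 : K)⁻¹ := by
                rw [show (cc : K) * y * (cc : K)⁻¹ = y by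
                  rw [hccy]; group]
        · intro a ha
          apply Subtype.ext
          simp only []
          show (h0 : K) * ((h0 : K)⁻¹ * (a : K)) = (a : K)
          group
        · intro cc _
          apply Subtype.ext
          show (h0 : K)⁻¹ * ((h0 : K) * (cc : K)) = (cc : K)
          group
      rw [Finset.sum_congr rfl h2, sum_const, smul_eq_mul] at h1
      have horb_f : orb y = univ.image f := rfl
      rw [horb_f, ← h1, card_univ, Nat.card_eq_fintype_card]
    -- per-orbit divisibility
    have hdvd_orb : ∀ y : K, y ∉ Subgroup.center K →
        p ^ r ∣ (orb y).card * (Sy y).card := by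
      intro y hyc
      have hos' := hos y
      have hC0 : Nat.card ↥(H ⊓ Subgroup.centralizer {y}) ≠ 0 := Nat.card_pos.ne'
      have hH0 : Nat.card ↥H ≠ 0 := Nat.card_pos.ne'
      have hB0 : (orb y).card ≠ 0 := by
        intro hzero
        rw [hzero, zero_mul] at hos'
        exact hH0 hos'.symm
      have hval : r = padicValNat p ((orb y).card) +
          padicValNat p (Nat.card ↥(H ⊓ Subgroup.centralizer {y})) := by
        rw [hr, ← hos', padicValNat.mul hB0 hC0]
      rw [hval, pow_add]
      exact mul_dvd_mul pow_padicValNat_dvd (hF1 y hyc)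
    -- Step F2 : sum over noncentral part is divisible by p^r
    have hF2 : p ^ r ∣ ∑ y ∈ Ync, (Sy y).card := by
      have hmaps : ∀ y ∈ Ync, orb y ∈ Ync.image orb := fun y hy => mem_image_of_mem _ hy
      rw [← sum_fiberwise_of_maps_to hmaps (fun y => (Sy y).card)]
      refine dvd_sum ?_
      intro o ho
      obtain ⟨y0, hy0, rfl⟩ := mem_image.1 ho
      have hy0' := hy0
      simp only [hYnc, hY0, mem_filter, mem_univ, true_and] at hy0'
      obtain ⟨⟨hy0H, hy0co⟩, hy0c⟩ := hy0'
      have hfib : Ync.filter (fun y => orb y = orb y0) = orb y0 := by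
        ext y
        simp only [mem_filter]
        constructor
        · rintro ⟨-, he⟩
          rw [← he]
          exact horb_self y
        · intro hy
          have hy2 : ∃ a ∈ H, a * y0 * a⁻¹ = y := by simpa [horbdef] using hy
          obtain ⟨a, haH, rfl⟩ := hy2
          constructor
          · simp only [hYnc, hY0, mem_filter, mem_univ, true_and]
            refine ⟨⟨mul_mem (mul_mem haH hy0H) (inv_mem haH), ?_⟩, ?_⟩
            · rwa [hconj_orderOf]
            · intro hcen
              exact hy0c (by
                have h5 := (inferInstance : (Subgroup.center K).Normal).conj_mem _ hcen a⁻¹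
                have h6 : a⁻¹ * (a * y0 * a⁻¹) * a⁻¹⁻¹ = y0 := by group
                rwa [h6] at h5)
          · simpa using horb_eq (⟨a, haH⟩ : ↥H) y0
      rw [hfib]
      have hconst : ∀ y ∈ orb y0, (Sy y).card = (Sy y0).card := by
        intro y hy
        have hy2 : ∃ a ∈ H, a * y0 * a⁻¹ = y := by simpa [horbdef] using hy
        obtain ⟨a, haH, rfl⟩ := hy2
        simpa using hSy_conj (⟨a, haH⟩ : ↥H) y0
      rw [Finset.sum_congr rfl hconst, sum_const, smul_eq_mul]
      exact hdvd_orb y0 hy0c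
    -- assembly
    have htot : Nat.card H = Zc.card * S.card + ∑ y ∈ Ync, (Sy y).card := by
      rw [hA, hB, Finset.sum_congr rfl hC, hsplit]
      congr 1
      rw [Finset.sum_congr rfl hcentral, sum_const, smul_eq_mul]
    have hpr_H : p ^ r ∣ Nat.card H := pow_padicValNat_dvd
    have hpr_z : p ^ r ∣ Zc.card * S.card := by
      have hsub := Nat.dvd_sub hpr_H hF2
      rwa [htot, Nat.add_sub_cancel] at hsub
    have hcop : (p ^ r).Coprime Zc.card :=
      Nat.Coprime.pow_left _ ((hp.coprime_iff_not_dvd).2 hz')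
    exact hcop.dvd_of_dvd_mul_left hpr_z


end core

section wrapper
variable {p : ℕ}

theorem pcoset_wrapper {G : Type u} [Group G] [Fintype G] (hp : p.Prime)
    (H : Subgroup G) (g : G) (hgn : g ∈ Subgroup.normalizer (H : Set G)) (hgord : ∃ k, orderOf g = p ^ k) :
    p ^ padicValNat p (Nat.card H) ∣
      Nat.card {x : G // x * g⁻¹ ∈ H ∧ ∃ k, orderOf x = p ^ k} := by
  classical
  set K0 : Subgroup G := H ⊔ Subgroup.zpowers g with hK0def
  have hgK0 : g ∈ K0 := (le_sup_right : Subgroup.zpowers g ≤ K0) (mem_zpowers g)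
  have hHK0 : H ≤ K0 := le_sup_left
  have hK0n : K0 ≤ Subgroup.normalizer (H : Set G) := sup_le H.le_normalizer (zpowers_le.2 hgn)
  have hnorm : (H.subgroupOf K0).Normal := by
    constructor
    intro n hn k
    rw [Subgroup.mem_subgroupOf] at hn ⊢
    have hcoe : ((k * n * k⁻¹ : ↥K0) : G) = (k : G) * (n : G) * (k : G)⁻¹ := by
      push_cast; rfl
    rw [hcoe]
    exact (Subgroup.mem_normalizer_iff.1 (hK0n k.2) _).1 hn
  -- the subgroup of elements lying in some coset H g^i
  set T : Subgroup G :=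
    { carrier := {k : G | ∃ i : ℤ, k * (g ^ i)⁻¹ ∈ H}
      one_mem' := ⟨0, by simpa using one_mem H⟩
      mul_mem' := by
        rintro a b ⟨i, hi⟩ ⟨j, hj⟩
        refine ⟨i + j, ?_⟩
        have heq : a * b * (g ^ (i + j))⁻¹ =
            (a * (g ^ i)⁻¹) * (g ^ i * (b * (g ^ j)⁻¹) * (g ^ i)⁻¹) := by
          rw [zpow_add]; group
        rw [heq]
        exact mul_mem hi
          ((Subgroup.mem_normalizer_iff.1 (Subgroup.zpow_mem (Subgroup.normalizer (H : Set G)) hgn i) _).1 hj)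
      inv_mem' := by
        rintro a ⟨i, hi⟩
        refine ⟨-i, ?_⟩
        have heq : a⁻¹ * (g ^ (-i))⁻¹ =
            g ^ (-i) * (a * (g ^ i)⁻¹)⁻¹ * (g ^ (-i))⁻¹ := by
          rw [zpow_neg]; group
        rw [heq]
        exact (Subgroup.mem_normalizer_iff.1
          (Subgroup.zpow_mem (Subgroup.normalizer (H : Set G)) hgn (-i)) _).1 (inv_mem hi) } with hTdef
  have hmemT : ∀ k : G, k ∈ T ↔ ∃ i : ℤ, k * (g ^ i)⁻¹ ∈ H := fun k => Iff.rfl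
  have hcover : K0 ≤ T := by
    refine sup_le (fun h hh => (hmemT h).2 ⟨0, by simpa using hh⟩) ?_
    rw [zpowers_le]
    exact (hmemT g).2 ⟨1, by simpa using one_mem H⟩
  have hq : ∀ k : ↥K0, ∃ j : ℕ, k ^ p ^ j ∈ H.subgroupOf K0 := by
    intro k
    obtain ⟨i, hi⟩ := (hmemT (k : G)).1 (hcover k.2)
    obtain ⟨m, hm⟩ := hgord
    refine ⟨m, ?_⟩
    set gb : ↥K0 := ⟨g, hgK0⟩ with hgb
    set N := H.subgroupOf K0 with hN
    have hmk : (QuotientGroup.mk (k : ↥K0) : ↥K0 ⧸ N) = QuotientGroup.mk (gb ^ i) := by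
      rw [QuotientGroup.eq]
      rw [Subgroup.mem_subgroupOf]
      have hcoe : (((k : ↥K0)⁻¹ * gb ^ i : ↥K0) : G) = (k : G)⁻¹ * g ^ i := by
        simp [hgb]
      rw [hcoe]
      have heq : (k : G)⁻¹ * g ^ i =
          g ^ (-i) * ((k : G) * (g ^ i)⁻¹)⁻¹ * (g ^ (-i))⁻¹ := by
        rw [zpow_neg]; group
      rw [heq]
      exact (Subgroup.mem_normalizer_iff.1
        (Subgroup.zpow_mem (Subgroup.normalizer (H : Set G)) hgn (-i)) _).1 (inv_mem hi)
    have hgb1 : gb ^ p ^ m = 1 := by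
      apply Subtype.ext
      have : ((gb ^ p ^ m : ↥K0) : G) = g ^ p ^ m := by push_cast; rfl
      rw [this]
      show g ^ p ^ m = (1 : G)
      rw [← hm]
      exact pow_orderOf_eq_one g
    have hpow : ((gb ^ i) ^ p ^ m : ↥K0) = 1 := by
      rw [← zpow_natCast (gb ^ i), ← zpow_mul, mul_comm, zpow_mul, zpow_natCast, hgb1, one_zpow]
    have hk1 : (QuotientGroup.mk ((k : ↥K0) ^ p ^ m) : ↥K0 ⧸ N) = 1 := by
      calc (QuotientGroup.mk ((k : ↥K0) ^ p ^ m) : ↥K0 ⧸ N)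
          = (QuotientGroup.mk (k : ↥K0) : ↥K0 ⧸ N) ^ p ^ m := by rw [QuotientGroup.mk_pow]
        _ = (QuotientGroup.mk (gb ^ i) : ↥K0 ⧸ N) ^ p ^ m := by rw [hmk]
        _ = QuotientGroup.mk ((gb ^ i) ^ p ^ m) := by rw [QuotientGroup.mk_pow]
        _ = 1 := by rw [hpow]; rfl
    exact (QuotientGroup.eq_one_iff _).1 hk1
  have hcore := pcoset_core hp (Fintype.card ↥K0) ↥K0 le_rfl (H.subgroupOf K0) hnorm hq
    ⟨g, hgK0⟩
  have hc1 : Nat.card ↥(H.subgroupOf K0) = Nat.card ↥H :=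
    Nat.card_congr (Subgroup.subgroupOfEquivOfLe hHK0).toEquiv
  have hc2 : Nat.card {x : ↥K0 //
      x * (⟨g, hgK0⟩ : ↥K0)⁻¹ ∈ H.subgroupOf K0 ∧ ∃ k, orderOf x = p ^ k} =
      Nat.card {x : G // x * g⁻¹ ∈ H ∧ ∃ k, orderOf x = p ^ k} := by
    apply Nat.card_congr
    refine
      { toFun := fun x => ⟨(x : ↥K0), ?_, ?_⟩
        invFun := fun x => ⟨⟨(x : G), ?_⟩, ?_, ?_⟩
        left_inv := ?_
        right_inv := ?_ }
    · have h1 := x.2.1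
      rw [Subgroup.mem_subgroupOf] at h1
      have hcoe : (((x : ↥K0) * (⟨g, hgK0⟩ : ↥K0)⁻¹ : ↥K0) : G) = ((x : ↥K0) : G) * g⁻¹ := by
        push_cast; rfl
      rwa [hcoe] at h1
    · obtain ⟨j, hj⟩ := x.2.2
      exact ⟨j, by rw [orderOf_coe, hj]⟩
    · have h1 := x.2.1
      have : (x : G) = ((x : G) * g⁻¹) * g := by group
      rw [this]
      exact mul_mem (hHK0 h1) hgK0
    · rw [Subgroup.mem_subgroupOf]
      have hcoe : (((⟨(x : G), by
          have h1 := x.2.1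
          have : (x : G) = ((x : G) * g⁻¹) * g := by group
          rw [this]
          exact mul_mem (hHK0 h1) hgK0⟩ : ↥K0) * (⟨g, hgK0⟩ : ↥K0)⁻¹ : ↥K0) : G) =
          (x : G) * g⁻¹ := by push_cast; rfl
      rw [hcoe]
      exact x.2.1
    · obtain ⟨j, hj⟩ := x.2.2
      exact ⟨j, by rw [orderOf_mk, hj]⟩
    · intro x
      apply Subtype.ext
      apply Subtype.ext
      rfl
    · intro x
      apply Subtype.ext
      rfl
  rw [hc1, hc2] at hcore
  exact hcore
end wrapper

/-- Let `G` be a finite group, `p` a prime, `φ : Γ → G` a homomorphism, `σ` an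
automorphism of `Γ`, and `g ∈ G` of `p`-power order with `g⁻¹ φ(γ) g = φ(σ γ)` for all
`γ`.  Then the set of `x ∈ G` of `p`-power order with `x⁻¹ φ(γ) x = φ(σ γ)` for all `γ`
is exactly the set of `p`-power order elements of the coset `C g`, where
`C = C_G(φ(Γ))`, and its cardinality is divisible by the `p`-part of `|C|`. -/
theorem extensions_are_ppower_elements_of_coset
    (G : Type*) [Group G] [Fintype G] (p : ℕ) (hp : p.Prime)
    (Γ : Type*) [Group Γ] (σ : Γ ≃* Γ) (φ : Γ →* G) (g : G)
    (hgord : ∃ k, orderOf g = p ^ k)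
    (hgconj : ∀ γ : Γ, g⁻¹ * φ γ * g = φ (σ γ)) :
    ({x : G | (∃ k, orderOf x = p ^ k) ∧ ∀ γ : Γ, x⁻¹ * φ γ * x = φ (σ γ)} =
      {x : G | (∃ c ∈ Subgroup.centralizer (Set.range φ), x = c * g) ∧
        ∃ k, orderOf x = p ^ k}) ∧
    p ^ padicValNat p (Nat.card (Subgroup.centralizer (Set.range φ))) ∣
      Nat.card {x : G // (∃ k, orderOf x = p ^ k) ∧ ∀ γ : Γ, x⁻¹ * φ γ * x = φ (σ γ)} := by
  set C : Subgroup G := Subgroup.centralizer (Set.range φ) with hCdef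
  have e1 : ∀ γ : Γ, φ γ * g = g * φ (σ γ) := by
    intro γ
    calc φ γ * g = g * (g⁻¹ * φ γ * g) := by group
      _ = g * φ (σ γ) := by rw [hgconj γ]
  have e2 : ∀ γ : Γ, g⁻¹ * φ γ = φ (σ γ) * g⁻¹ := by
    intro γ
    calc g⁻¹ * φ γ = (g⁻¹ * φ γ * g) * g⁻¹ := by group
      _ = φ (σ γ) * g⁻¹ := by rw [hgconj γ]
  have hiff : ∀ x : G, (∀ γ : Γ, x⁻¹ * φ γ * x = φ (σ γ)) ↔ x * g⁻¹ ∈ C := by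
    intro x
    constructor
    · intro hx
      refine Subgroup.mem_centralizer_iff.2 ?_
      rintro z ⟨γ, rfl⟩
      have hxγ : φ γ * x = x * φ (σ γ) := by
        calc φ γ * x = x * (x⁻¹ * φ γ * x) := by group
          _ = x * φ (σ γ) := by rw [hx γ]
      calc φ γ * (x * g⁻¹) = (φ γ * x) * g⁻¹ := by group
        _ = x * (φ (σ γ) * g⁻¹) := by rw [hxγ]; group
        _ = x * (g⁻¹ * φ γ) := by rw [← e2 γ]
        _ = (x * g⁻¹) * φ γ := by group
    · intro hx γ
      have hc := Subgroup.mem_centralizer_iff.1 hx (φ γ) ⟨γ, rfl⟩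
      calc x⁻¹ * φ γ * x
          = g⁻¹ * ((x * g⁻¹)⁻¹ * (φ γ * (x * g⁻¹))) * g := by group
        _ = g⁻¹ * ((x * g⁻¹)⁻¹ * ((x * g⁻¹) * φ γ)) * g := by rw [hc]
        _ = g⁻¹ * φ γ * g := by group
        _ = φ (σ γ) := hgconj γ
  constructor
  · ext x
    simp only [Set.mem_setOf_eq]
    constructor
    · rintro ⟨hp1, hcond⟩
      exact ⟨⟨x * g⁻¹, (hiff x).1 hcond, by group⟩, hp1⟩
    · rintro ⟨⟨c, hcC, rfl⟩, hp1⟩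
      refine ⟨hp1, (hiff (c * g)).2 ?_⟩
      simpa using hcC
  · have hgn : g ∈ Subgroup.normalizer (C : Set G) := by
      refine Subgroup.mem_normalizer_iff.2 fun c => ⟨?_, ?_⟩
      · intro hcC
        refine Subgroup.mem_centralizer_iff.2 ?_
        rintro z ⟨γ, rfl⟩
        have hc := Subgroup.mem_centralizer_iff.1 hcC (φ (σ γ)) ⟨σ γ, rfl⟩
        calc φ γ * (g * c * g⁻¹) = (φ γ * g) * c * g⁻¹ := by group
          _ = g * (φ (σ γ) * c) * g⁻¹ := by rw [e1 γ]; group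
          _ = g * (c * φ (σ γ)) * g⁻¹ := by rw [hc]
          _ = (g * c) * (φ (σ γ) * g⁻¹) := by group
          _ = (g * c) * (g⁻¹ * φ γ) := by rw [← e2 γ]
          _ = (g * c * g⁻¹) * φ γ := by group
      · intro hgcC
        refine Subgroup.mem_centralizer_iff.2 ?_
        rintro z ⟨γ, rfl⟩
        have key : g⁻¹ * φ (σ.symm γ) * g = φ γ := by
          rw [hgconj (σ.symm γ), MulEquiv.apply_symm_apply]
        have hc := Subgroup.mem_centralizer_iff.1 hgcC (φ (σ.symm γ)) ⟨σ.symm γ, rfl⟩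
        calc φ γ * c = (g⁻¹ * φ (σ.symm γ) * g) * c := by rw [key]
          _ = g⁻¹ * (φ (σ.symm γ) * (g * c * g⁻¹)) * g := by group
          _ = g⁻¹ * ((g * c * g⁻¹) * φ (σ.symm γ)) * g := by rw [hc]
          _ = c * (g⁻¹ * φ (σ.symm γ) * g) := by group
          _ = c * φ γ := by rw [key]
    have hcards : Nat.card {x : G // (∃ k, orderOf x = p ^ k) ∧
        ∀ γ : Γ, x⁻¹ * φ γ * x = φ (σ γ)} =
        Nat.card {x : G // x * g⁻¹ ∈ C ∧ ∃ k, orderOf x = p ^ k} := by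
      apply Nat.card_congr
      refine Equiv.subtypeEquivRight fun x => ?_
      constructor
      · rintro ⟨h1, h2⟩; exact ⟨(hiff x).1 h2, h1⟩
      · rintro ⟨h1, h2⟩; exact ⟨h2, (hiff x).2 h1⟩
    rw [hcards]
    exact pcoset_wrapper hp C g hgn hgord
end

section
/- Let S be a set of primes and Ẑ_S the inverse limit of Z/n over natural numbers n divisible by no prime in S. Every continuous surjection f : H → Ẑ_S of profinite groups admits a continuous group-homomorphism section (so H ≅ ker(f) ⋊ Ẑ_S). -/
/-- Indexing set: positive natural numbers divisible by no prime in `S`. -/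
def ZHatIndex (S : Set ℕ) : Type := {n : ℕ // 0 < n ∧ ∀ p ∈ S, ¬ p ∣ n}

/-- `Ẑ_S`, the inverse limit of `ℤ/n` over positive integers `n` divisible by no prime
in `S`, realized as the subgroup of compatible elements of `∏ ℤ/n`. -/
def ZHatS (S : Set ℕ) : AddSubgroup (∀ n : ZHatIndex S, ZMod n.1) where
  carrier := {x | ∀ (m n : ZHatIndex S) (h : m.1 ∣ n.1),
    ZMod.castHom h (ZMod m.1) (x n) = x m}
  zero_mem' := by intro m n h; simp
  add_mem' := by
    intro a b ha hb m n h
    show (ZMod.castHom h (ZMod m.1)) (a n + b n) = a m + b m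
    rw [map_add, ha m n h, hb m n h]
  neg_mem' := by
    intro a ha m n h
    show (ZMod.castHom h (ZMod m.1)) (-(a n)) = -(a m)
    rw [map_neg, ha m n h]

section NumberTheory
variable (S : Set ℕ)

/-- `m` is an `S`-number: positive, and all prime factors lie in `S`. -/
def IsSNum (m : ℕ) : Prop := 0 < m ∧ ∀ q : ℕ, q.Prime → q ∣ m → q ∈ S

/-- `k` is `S`-free: no prime of `S` divides it. -/
def IsSFree (k : ℕ) : Prop := ∀ p ∈ S, ¬ p ∣ k

variable {S}

lemma IsSNum.one : IsSNum S 1 :=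
  ⟨one_pos, fun q hq hdvd => absurd (Nat.le_of_dvd one_pos hdvd) (by have := hq.two_le; omega)⟩

lemma IsSNum.mul {a b : ℕ} (ha : IsSNum S a) (hb : IsSNum S b) : IsSNum S (a * b) :=
  ⟨Nat.mul_pos ha.1 hb.1, fun q hq hdvd => ((Nat.Prime.dvd_mul hq).1 hdvd).elim (ha.2 q hq) (hb.2 q hq)⟩

lemma IsSFree.coprime {a b : ℕ} (ha : IsSFree S a) (hb : IsSNum S b) : Nat.Coprime a b := by
  by_contra h
  obtain ⟨p, hp, hpa, hpb⟩ := Nat.Prime.not_coprime_iff_dvd.1 h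
  exact ha p (hb.2 p hp hpb) hpa

open Classical in
/-- the largest `S`-free divisor of `N`. -/
noncomputable def sfPart (S : Set ℕ) (N : ℕ) : ℕ :=
  if h : (N.divisors.filter (fun k => ∀ p ∈ S, ¬ p ∣ k)).Nonempty
  then (N.divisors.filter (fun k => ∀ p ∈ S, ¬ p ∣ k)).max' h else 1

variable (hS : ∀ p ∈ S, p.Prime)
include hS

open Classical in
lemma sfPart_nonempty {N : ℕ} (hN : N ≠ 0) :
    (N.divisors.filter (fun k => ∀ p ∈ S, ¬ p ∣ k)).Nonempty := by
  refine ⟨1, Finset.mem_filter.2 ⟨Nat.one_mem_divisors.2 hN, ?_⟩⟩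
  intro p hp hdvd
  exact absurd (Nat.le_of_dvd one_pos hdvd) (by have := (hS p hp).two_le; omega)

open Classical in
lemma sfPart_mem {N : ℕ} (hN : N ≠ 0) :
    (sfPart S N) ∣ N ∧ IsSFree S (sfPart S N) := by
  have h := sfPart_nonempty hS hN
  have : sfPart S N ∈ N.divisors.filter (fun k => ∀ p ∈ S, ¬ p ∣ k) := by
    rw [sfPart, dif_pos h]; exact Finset.max'_mem _ h
  rw [Finset.mem_filter, Nat.mem_divisors] at this
  exact ⟨this.1.1, this.2⟩

open Classical in
lemma le_sfPart {N k : ℕ} (hN : N ≠ 0) (hk : k ∣ N) (hfree : IsSFree S k) :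
    k ≤ sfPart S N := by
  have h := sfPart_nonempty hS hN
  rw [sfPart, dif_pos h]
  exact Finset.le_max' _ k (Finset.mem_filter.2 ⟨Nat.mem_divisors.2 ⟨hk, hN⟩, hfree⟩)

lemma sfPart_pos {N : ℕ} (hN : N ≠ 0) : 0 < sfPart S N :=
  Nat.pos_of_dvd_of_pos (sfPart_mem hS hN).1 (Nat.pos_of_ne_zero hN)

lemma sfPart_compl_isSNum {N : ℕ} (hN : N ≠ 0) : IsSNum S (N / sfPart S N) := by
  have hd := (sfPart_mem hS hN).1
  have hpos : 0 < N / sfPart S N :=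
    Nat.div_pos (Nat.le_of_dvd (Nat.pos_of_ne_zero hN) hd) (sfPart_pos hS hN)
  refine ⟨hpos, fun q hq hdvd => ?_⟩
  by_contra hqS
  have hk : sfPart S N * q ∣ N := by
    have h5 := mul_dvd_mul_left (sfPart S N) hdvd
    rwa [Nat.mul_div_cancel' hd] at h5
  have hfree : IsSFree S (sfPart S N * q) := by
    intro p hp hpd
    rcases (hS p hp).dvd_mul.1 hpd with h1 | h2
    · exact (sfPart_mem hS hN).2 p hp h1
    · exact hqS (((Nat.prime_dvd_prime_iff_eq (hS p hp) hq).1 h2) ▸ hp)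
  have := le_sfPart hS hN hk hfree
  nlinarith [sfPart_pos hS hN, hq.two_le]

lemma sfPart_mul_compl {N : ℕ} (hN : N ≠ 0) : sfPart S N * (N / sfPart S N) = N :=
  Nat.mul_div_cancel' (sfPart_mem hS hN).1

/-- if `N ∣ M` then the `S`-number part of `N` divides that of `M`. -/
lemma sfCompl_dvd {N M : ℕ} (hN : N ≠ 0) (hM : M ≠ 0) (h : N ∣ M) :
    N / sfPart S N ∣ M / sfPart S M := by
  have h2 : N / sfPart S N ∣ M := dvd_trans (Nat.div_dvd_of_dvd (sfPart_mem hS hN).1) h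
  have h3 : N / sfPart S N ∣ sfPart S M * (M / sfPart S M) := by
    rw [sfPart_mul_compl hS hM]; exact h2
  exact (Nat.Coprime.dvd_of_dvd_mul_left
    (Nat.Coprime.symm (((sfPart_mem hS hM).2).coprime (sfPart_compl_isSNum hS hN))) h3)

end NumberTheory

section Profinite
variable {G : Type*} [AddGroup G] [TopologicalSpace G] [IsTopologicalAddGroup G] [CompactSpace G]

lemma exist_openNormalAddSubgroup_sub_clopen {W : Set G} (hW : IsClopen W) (h0 : (0 : G) ∈ W) :
    ∃ U : AddSubgroup G, U.Normal ∧ IsOpen (U : Set G) ∧ (U : Set G) ⊆ W := by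
  haveI : CompactSpace (Multiplicative G) := ‹CompactSpace G›
  obtain ⟨V, hV⟩ := IsTopologicalGroup.exist_openNormalSubgroup_sub_clopen_nhds_of_one
    (G := Multiplicative G) hW h0
  refine ⟨Subgroup.toAddSubgroup' V.toSubgroup, ?_, V.isOpen, hV⟩
  constructor
  intro n hn g
  have := V.isNormal'.conj_mem (Multiplicative.ofAdd n) hn (Multiplicative.ofAdd g)
  simpa [Subgroup.toAddSubgroup'] using this

lemma eq_zero_of_mem_all_openNormal [T2Space G] [TotallyDisconnectedSpace G] (x : G)
    (h : ∀ U : AddSubgroup G, U.Normal → IsOpen (U : Set G) → x ∈ U) : x = 0 := by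
  by_contra hx
  obtain ⟨V, hVc, h0V, hVs⟩ := compact_exists_isClopen_in_isOpen
    (isOpen_compl_singleton (x := x)) (by simpa using (Ne.symm hx))
  obtain ⟨U, hUn, hUo, hUV⟩ := exist_openNormalAddSubgroup_sub_clopen hVc h0V
  exact hVs (hUV (h U hUn hUo)) rfl

end Profinite

namespace ZHatS
variable {S : Set ℕ}

/-- the element all of whose coordinates are `1`. -/
def oneZ (S : Set ℕ) : ZHatS S := ⟨fun _ => 1, fun m _ h => map_one (ZMod.castHom h (ZMod m.1))⟩

lemma exists_nsmul_eq {m : ℕ} (hm : IsSNum S m) (z : ZHatS S) :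
    ∃ w : ZHatS S, m • w = z := by
  have hcop : ∀ n : ZHatIndex S, Nat.Coprime m n.1 :=
    fun n => (IsSFree.coprime (fun p hp => n.2.2 p hp) hm).symm
  set u : ∀ n : ZHatIndex S, (ZMod n.1)ˣ := fun n => ZMod.unitOfCoprime m (hcop n) with hu
  have hucoe : ∀ n : ZHatIndex S, ((u n : (ZMod n.1)ˣ) : ZMod n.1) = (m : ZMod n.1) :=
    fun n => ZMod.coe_unitOfCoprime m (hcop n)
  have hkey : ∀ (a b : ZHatIndex S) (h : a.1 ∣ b.1),
      ZMod.castHom h (ZMod a.1) ((↑(u b)⁻¹ : ZMod b.1)) = (↑(u a)⁻¹ : ZMod a.1) := by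
    intro a b h
    have h1 : (m : ZMod a.1) * ZMod.castHom h (ZMod a.1) ((↑(u b)⁻¹ : ZMod b.1)) = 1 := by
      rw [← map_natCast (ZMod.castHom h (ZMod a.1)) m, ← map_mul, ← hucoe b,
        Units.mul_inv, map_one]
    have h2 : (m : ZMod a.1) * (↑(u a)⁻¹ : ZMod a.1) = 1 := by
      rw [← hucoe a, Units.mul_inv]
    have h3 := h1.trans h2.symm
    rw [← hucoe a] at h3
    exact (Units.mul_right_inj (u a)).1 h3
  refine ⟨⟨fun n => (↑(u n)⁻¹ : ZMod n.1) * z.1 n, ?_⟩, ?_⟩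
  · intro a b h
    show ZMod.castHom h (ZMod a.1) _ = _
    rw [map_mul, hkey a b h, z.2 a b h]
  · apply Subtype.ext
    funext n
    show m • ((↑(u n)⁻¹ : ZMod n.1) * z.1 n) = z.1 n
    rw [nsmul_eq_mul, ← mul_assoc, ← hucoe n, Units.mul_inv, one_mul]

end ZHatS

/-- Every continuous surjection from a profinite group onto `Ẑ_S` admits a continuous
homomorphic section. -/
theorem continuous_section_of_surjection_onto_ZHatS
    (S : Set ℕ) (hS : ∀ p ∈ S, p.Prime)
    (H : Type*) [AddGroup H] [TopologicalSpace H] [IsTopologicalAddGroup H]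
    [CompactSpace H] [T2Space H] [TotallyDisconnectedSpace H] :
    letI : ∀ n : ZHatIndex S, TopologicalSpace (ZMod n.1) := fun _ => ⊥
    ∀ f : H →+ ZHatS S, Continuous f → Function.Surjective f →
      ∃ s : ZHatS S →+ H, Continuous s ∧ ∀ z, f (s z) = z := by
  intro f hcont hsurj
  letI instT : ∀ n : ZHatIndex S, TopologicalSpace (ZMod n.1) := fun _ => ⊥
  haveI instD : ∀ n : ZHatIndex S, DiscreteTopology (ZMod n.1) := fun _ => ⟨rfl⟩
  haveI : Nonempty (ZHatIndex S) :=
    ⟨⟨1, one_pos, fun p hp hd =>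
      absurd (Nat.le_of_dvd one_pos hd) (by have := (hS p hp).two_le; omega)⟩⟩
  -- the generator
  obtain ⟨h, hh⟩ := hsurj (ZHatS.oneZ S)
  set C : AddSubgroup H := (AddSubgroup.zmultiples h).topologicalClosure with hCdef
  have hCclosed : IsClosed (C : Set H) := (AddSubgroup.zmultiples h).isClosed_topologicalClosure
  have hCcompact : IsCompact (C : Set H) := hCclosed.isCompact
  have hzleC : AddSubgroup.zmultiples h ≤ C := (AddSubgroup.zmultiples h).le_topologicalClosure
  have hhC : h ∈ C := hzleC (AddSubgroup.mem_zmultiples h)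
  -- commutativity of C
  have hcomm : ∀ a ∈ C, ∀ b ∈ C, a + b = b + a := by
    have hcl : (C : Set H) = closure (AddSubgroup.zmultiples h : Set H) := rfl
    have step1 : ∀ a ∈ AddSubgroup.zmultiples h, ∀ b ∈ C, a + b = b + a := by
      rintro a ⟨j, rfl⟩ b hb
      have hsub : (C : Set H) ⊆ {b | (j • h) + b = b + (j • h)} := by
        rw [hcl]
        apply closure_minimal
        · rintro _ ⟨k, rfl⟩
          exact ((AddCommute.refl h).zsmul_zsmul j k)
        · exact isClosed_eq (continuous_const.add continuous_id) (continuous_id.add continuous_const)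
      exact hsub hb
    intro a ha b hb
    have hsub : (C : Set H) ⊆ {a | a + b = b + a} := by
      rw [hcl]
      apply closure_minimal
      · intro a' ha'
        exact step1 a' ha' b hb
      · exact isClosed_eq (continuous_id.add continuous_const) (continuous_const.add continuous_id)
    exact hsub ha
  -- continuity of the coordinates of f
  have hcoord : ∀ i : ZHatIndex S, Continuous fun x : H => (f x).1 i :=
    fun i => (continuous_apply i).comp (continuous_subtype_val.comp hcont)
  -- Step 2: f maps C onto all of ZHatS
  have hstep2 : ∀ z : ZHatS S, ∃ c ∈ C, f c = z := by
    intro z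
    set X : ZHatIndex S → Set H := fun n => (C : Set H) ∩ {x | (f x).1 n = z.1 n} with hX
    have hXclosed : ∀ n, IsClosed (X n) := by
      intro n
      exact hCclosed.inter (IsClosed.preimage (hcoord n) (isClosed_singleton (x := z.1 n)))
    have hXcompact : ∀ n, IsCompact (X n) := fun n =>
      hCcompact.inter_right (IsClosed.preimage (hcoord n) (isClosed_singleton (x := z.1 n)))
    have hXne : ∀ n, (X n).Nonempty := by
      intro n
      haveI : NeZero n.1 := ⟨n.2.1.ne'⟩
      refine ⟨((z.1 n).val : ℤ) • h, hzleC ⟨((z.1 n).val : ℤ), rfl⟩, ?_⟩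
      show (f (((z.1 n).val : ℤ) • h)).1 n = z.1 n
      rw [map_zsmul, hh]
      show ((z.1 n).val : ℤ) • (ZHatS.oneZ S).1 n = z.1 n
      show ((z.1 n).val : ℤ) • (1 : ZMod n.1) = z.1 n
      rw [Int.smul_one_eq_cast, Int.cast_natCast]
      exact ZMod.natCast_rightInverse (z.1 n)
    have hXdir : Directed (· ⊇ ·) X := by
      intro a b
      have hlpos : 0 < Nat.lcm a.1 b.1 := Nat.pos_of_ne_zero (Nat.lcm_ne_zero a.2.1.ne' b.2.1.ne')
      have hlfree : ∀ p ∈ S, ¬ p ∣ Nat.lcm a.1 b.1 := by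
        intro p hp hd
        have : p ∣ a.1 * b.1 := hd.trans (Nat.lcm_dvd_mul a.1 b.1)
        rcases ((hS p hp).dvd_mul).1 this with h1 | h2
        · exact a.2.2 p hp h1
        · exact b.2.2 p hp h2
      set l : ZHatIndex S := ⟨Nat.lcm a.1 b.1, hlpos, hlfree⟩
      refine ⟨l, ?_, ?_⟩
      · intro x hx
        refine ⟨hx.1, ?_⟩
        have h1 := (f x).2 a l (Nat.dvd_lcm_left a.1 b.1)
        have h2 := z.2 a l (Nat.dvd_lcm_left a.1 b.1)
        show (f x).1 a = z.1 a
        rw [← h1, ← h2]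
        exact congrArg _ hx.2
      · intro x hx
        refine ⟨hx.1, ?_⟩
        have h1 := (f x).2 b l (Nat.dvd_lcm_right a.1 b.1)
        have h2 := z.2 b l (Nat.dvd_lcm_right a.1 b.1)
        show (f x).1 b = z.1 b
        rw [← h1, ← h2]
        exact congrArg _ hx.2
    obtain ⟨c, hc⟩ := IsCompact.nonempty_iInter_of_directed_nonempty_isCompact_isClosed
      X hXdir hXne hXcompact hXclosed
    simp only [Set.mem_iInter] at hc
    refine ⟨c, (hc (Classical.arbitrary _)).1, ?_⟩
    apply Subtype.ext
    funext n
    exact (hc n).2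
  -- the set D
  set Dset : Set H := {x | ∀ m : ℕ, IsSNum S m → ∃ c ∈ C, m • c = x} with hDdef
  have hDclosed : IsClosed Dset := by
    have : Dset = ⋂ (m : {m : ℕ // IsSNum S m}), (fun c => m.1 • c) '' (C : Set H) := by
      ext x
      simp only [Set.mem_iInter, Set.mem_image, hDdef, Set.mem_setOf_eq]
      constructor
      · intro hx m
        obtain ⟨c, hc, e⟩ := hx m.1 m.2
        exact ⟨c, hc, e⟩
      · intro hx m hm
        obtain ⟨c, hc, e⟩ := hx ⟨m, hm⟩
        exact ⟨c, hc, e⟩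
    rw [this]
    exact isClosed_iInter fun m => (hCcompact.image (continuous_nsmul m.1)).isClosed
  have hDcompact : IsCompact Dset := hDclosed.isCompact
  -- Step 4: f maps D onto all of ZHatS
  have hDstep : ∀ z : ZHatS S, ∃ x ∈ Dset, f x = z := by
    intro z
    haveI : Nonempty {m : ℕ // IsSNum S m} := ⟨⟨1, IsSNum.one⟩⟩
    set Y : {m : ℕ // IsSNum S m} → Set H :=
      fun m => ((fun c => m.1 • c) '' (C : Set H)) ∩ f ⁻¹' {z} with hY
    have hYclosed : ∀ m, IsClosed (Y m) :=
      fun m => ((hCcompact.image (continuous_nsmul m.1)).isClosed).inter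
        (IsClosed.preimage hcont (isClosed_singleton (x := z)))
    have hYcompact : ∀ m, IsCompact (Y m) :=
      fun m => (hCcompact.image (continuous_nsmul m.1)).inter_right
        (IsClosed.preimage hcont (isClosed_singleton (x := z)))
    have hYne : ∀ m, (Y m).Nonempty := by
      intro m
      obtain ⟨w, hw⟩ := ZHatS.exists_nsmul_eq m.2 z
      obtain ⟨c, hcC, hcw⟩ := hstep2 w
      refine ⟨m.1 • c, ⟨c, hcC, rfl⟩, ?_⟩
      simp only [Set.mem_preimage, Set.mem_singleton_iff, map_nsmul, hcw, hw]
    have hYdir : Directed (· ⊇ ·) Y := by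
      intro a b
      refine ⟨⟨a.1 * b.1, a.2.mul b.2⟩, ?_, ?_⟩
      · rintro x ⟨⟨c, hc, rfl⟩, hfx⟩
        refine ⟨⟨b.1 • c, C.nsmul_mem hc b.1, ?_⟩, hfx⟩
        exact (mul_nsmul' c a.1 b.1).symm
      · rintro x ⟨⟨c, hc, rfl⟩, hfx⟩
        refine ⟨⟨a.1 • c, C.nsmul_mem hc a.1, ?_⟩, hfx⟩
        exact (mul_nsmul c a.1 b.1).symm
    obtain ⟨x, hx⟩ := IsCompact.nonempty_iInter_of_directed_nonempty_isCompact_isClosed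
      Y hYdir hYne hYcompact hYclosed
    simp only [Set.mem_iInter] at hx
    refine ⟨x, ?_, ?_⟩
    · intro m hm
      obtain ⟨⟨c, hc, e⟩, _⟩ := hx ⟨m, hm⟩
      exact ⟨c, hc, e⟩
    · exact (hx (Classical.arbitrary _)).2
  -- injectivity at 0
  have hinj : ∀ x ∈ Dset, f x = 0 → x = 0 := by
    intro x hxD hfx
    apply eq_zero_of_mem_all_openNormal
    intro U hUn hUo
    haveI := hUn
    haveI : Finite (H ⧸ U) := U.quotient_finite_of_isOpen hUo
    set π : H →+ H ⧸ U := QuotientAddGroup.mk' U with hπ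
    obtain ⟨N, hN⟩ : ∃ N, addOrderOf (π h) = N := ⟨_, rfl⟩
    have hNpos : 0 < N := hN ▸ addOrderOf_pos _
    obtain ⟨N₁, hN1def⟩ : ∃ k, sfPart S N = k := ⟨_, rfl⟩
    have hN1 : N₁ ∣ N ∧ IsSFree S N₁ := hN1def ▸ sfPart_mem hS hNpos.ne'
    have hN1pos : 0 < N₁ := hN1def ▸ sfPart_pos hS hNpos.ne'
    set i₁ : ZHatIndex S := ⟨N₁, hN1pos, hN1.2⟩ with hi₁
    set φ : H →+ ZMod N₁ :=
      ((Pi.evalAddMonoidHom (fun n : ZHatIndex S => ZMod n.1) i₁).comp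
        (ZHatS S).subtype).comp f with hφ
    have hφeval : ∀ w : H, φ w = (f w).1 i₁ := fun w => rfl
    have hφcont : Continuous φ := (continuous_apply i₁).comp (continuous_subtype_val.comp hcont)
    have hφh : φ h = 1 := by rw [hφeval, hh]; rfl
    set U' : AddSubgroup H := U ⊓ φ.ker with hU'
    haveI hU'n : U'.Normal := by
      constructor
      intro n hn g
      refine ⟨hUn.conj_mem n hn.1 g, ?_⟩
      have hn2 : φ n = 0 := hn.2
      simp [AddMonoidHom.mem_ker, map_add, map_neg, hn2]
    have hU'o : IsOpen (U' : Set H) := by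
      have h1 : IsOpen ((φ.ker : AddSubgroup H) : Set H) := by
        have h2 : ((φ.ker : AddSubgroup H) : Set H) = φ ⁻¹' {0} := by
          ext w; simp [AddMonoidHom.mem_ker]
        rw [h2]
        exact (isOpen_discrete {(0 : ZMod N₁)}).preimage hφcont
      exact hUo.inter h1
    haveI : Finite (H ⧸ U') := U'.quotient_finite_of_isOpen hU'o
    set π' : H →+ H ⧸ U' := QuotientAddGroup.mk' U' with hπ'
    obtain ⟨M, hM⟩ : ∃ M, addOrderOf (π' h) = M := ⟨_, rfl⟩
    have hMpos : 0 < M := hM ▸ addOrderOf_pos _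
    obtain ⟨M₂, hM2def⟩ : ∃ k, M / sfPart S M = k := ⟨_, rfl⟩
    have hM2 : IsSNum S M₂ := hM2def ▸ sfPart_compl_isSNum hS hMpos.ne'
    have hNM : N ∣ M := by
      rw [← hN, addOrderOf_dvd_iff_nsmul_eq_zero, ← map_nsmul]
      apply (QuotientAddGroup.eq_zero_iff _).2
      have hMU : M • h ∈ U' := by
        apply (QuotientAddGroup.eq_zero_iff _).1
        show π' (M • h) = 0
        rw [map_nsmul, ← hM]
        exact addOrderOf_nsmul_eq_zero (π' h)
      exact hMU.1
    obtain ⟨y, hyC, hyx⟩ := hxD M₂ hM2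
    have hVle : C ≤ AddSubgroup.comap π' (AddSubgroup.zmultiples (π' h)) := by
      apply AddSubgroup.topologicalClosure_minimal
      · rintro _ ⟨k, rfl⟩
        exact AddSubgroup.mem_comap.2 (by rw [map_zsmul]; exact ⟨k, rfl⟩)
      · apply AddSubgroup.isClosed_of_isOpen
        apply AddSubgroup.isOpen_mono (H₁ := U') _ hU'o
        intro w hw
        rw [AddSubgroup.mem_comap]
        have hw0 : π' w = 0 := (QuotientAddGroup.eq_zero_iff _).2 hw
        rw [hw0]
        exact zero_mem _
    obtain ⟨a, ha0⟩ := AddSubgroup.mem_comap.1 (hVle hyC)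
    have ha : a • π' h = π' y := ha0
    have hyh : y - a • h ∈ U' := by
      apply (QuotientAddGroup.eq_zero_iff _).1
      show π' (y - a • h) = 0
      rw [map_sub, map_zsmul, ha, sub_self]
    have hφy : φ y = a • (1 : ZMod N₁) := by
      have h1 : φ (y - a • h) = 0 := hyh.2
      rw [map_sub, map_zsmul, hφh, sub_eq_zero] at h1
      exact h1
    have hφx0 : φ x = 0 := by rw [hφeval, hfx]; rfl
    have hsmul : ((M₂ : ℤ) * a) • (1 : ZMod N₁) = 0 := by
      have h1 : φ x = M₂ • φ y := by rw [← hyx, map_nsmul]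
      rw [hφx0, hφy] at h1
      rw [mul_zsmul, natCast_zsmul]
      exact h1.symm
    have hdvd : (N₁ : ℤ) ∣ (M₂ : ℤ) * a := by
      have h6 := (addOrderOf_dvd_iff_zsmul_eq_zero (x := (1 : ZMod N₁)) (i := (M₂ : ℤ) * a)).2 hsmul
      rwa [ZMod.addOrderOf_one] at h6
    have hN1a : (N₁ : ℤ) ∣ a := by
      have hcop : IsCoprime (N₁ : ℤ) (M₂ : ℤ) :=
        Nat.isCoprime_iff_coprime.2 ((hN1.2).coprime hM2)
      exact hcop.dvd_of_dvd_mul_left hdvd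
    -- conclude : x ∈ U
    have hxU' : x - ((M₂ : ℤ) * a) • h ∈ U' := by
      have e1 : ((M₂ : ℤ) * a) • h = M₂ • (a • h) := by
        rw [mul_zsmul, natCast_zsmul]
      have hahC : a • h ∈ C := hzleC ⟨a, rfl⟩
      have hcm : AddCommute y (-(a • h)) :=
        AddCommute.neg_right (hcomm y hyC (a • h) hahC)
      have e2 : M₂ • (y - a • h) = M₂ • y - M₂ • (a • h) := by
        rw [sub_eq_add_neg, hcm.add_nsmul M₂, neg_nsmul, ← sub_eq_add_neg]
      rw [e1, ← hyx, ← e2]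
      exact U'.nsmul_mem hyh M₂
    have hmulU : ((M₂ : ℤ) * a) • h ∈ U := by
      obtain ⟨a', rfl⟩ := hN1a
      have hN2M2 : N / N₁ ∣ M₂ := by
        rw [← hN1def, ← hM2def]
        exact sfCompl_dvd hS hNpos.ne' hMpos.ne' hNM
      obtain ⟨t, ht⟩ := hN2M2
      have hNh : (N : ℤ) • h ∈ U := by
        rw [natCast_zsmul]
        apply (QuotientAddGroup.eq_zero_iff _).1
        show π (N • h) = 0
        rw [map_nsmul, ← hN]
        exact addOrderOf_nsmul_eq_zero (π h)
      have e3 : (M₂ : ℤ) * ((N₁ : ℤ) * a') = ((t : ℤ) * a') * (N : ℤ) := by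
        have e4 : (N : ℤ) = (N₁ : ℤ) * ((N / N₁ : ℕ) : ℤ) := by
          rw [← Int.natCast_mul]
          norm_cast
          rw [← hN1def]
          exact (sfPart_mul_compl hS hNpos.ne').symm
        rw [e4]
        have e5 : (M₂ : ℤ) = ((N / N₁ : ℕ) : ℤ) * (t : ℤ) := by
          rw [← Int.natCast_mul]
          norm_cast
        rw [e5]; ring
      rw [e3, mul_zsmul]
      exact U.zsmul_mem hNh _
    have hfin := U.add_mem hxU'.1 hmulU
    rwa [sub_add_cancel] at hfin
  -- uniqueness of preimages in D
  have hDadd : ∀ x ∈ Dset, ∀ y ∈ Dset, x + y ∈ Dset := by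
    intro x hx y hy m hm
    obtain ⟨c, hc, e⟩ := hx m hm
    obtain ⟨c', hc', e'⟩ := hy m hm
    refine ⟨c + c', C.add_mem hc hc', ?_⟩
    have hcm : AddCommute c c' := hcomm c hc c' hc'
    rw [hcm.add_nsmul m, e, e']
  have hDneg : ∀ x ∈ Dset, -x ∈ Dset := by
    intro x hx m hm
    obtain ⟨c, hc, e⟩ := hx m hm
    exact ⟨-c, C.neg_mem hc, by rw [neg_nsmul, e]⟩
  have huniq : ∀ z : ZHatS S, ∃! x, x ∈ Dset ∧ f x = z := by
    intro z
    obtain ⟨x, hxD, hxz⟩ := hDstep z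
    refine ⟨x, ⟨hxD, hxz⟩, ?_⟩
    rintro x' ⟨hx'D, hx'z⟩
    have hsub : x' + -x ∈ Dset := hDadd x' hx'D (-x) (hDneg x hxD)
    have hf0 : f (x' + -x) = 0 := by rw [map_add, map_neg, hx'z, hxz, add_neg_cancel]
    have h0 := hinj _ hsub hf0
    have : x' = x := by
      have := congrArg (· + x) h0
      simpa using this
    exact this
  -- the section as a function
  choose sfun hsfunD hsfunf using hDstep
  have hadd : ∀ z w : ZHatS S, sfun (z + w) = sfun z + sfun w := by
    intro z w
    have h1 : sfun z + sfun w ∈ Dset := hDadd _ (hsfunD z) _ (hsfunD w)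
    have h2 : f (sfun z + sfun w) = z + w := by rw [map_add, hsfunf, hsfunf]
    exact (huniq (z + w)).unique ⟨hsfunD _, hsfunf _⟩ ⟨h1, h2⟩
  -- continuity
  haveI : CompactSpace Dset := isCompact_iff_compactSpace.1 hDcompact
  have hgbij : Function.Bijective (fun x : Dset => f x.1) := by
    constructor
    · intro x y hxy
      apply Subtype.ext
      exact (huniq (f y.1)).unique ⟨x.2, hxy⟩ ⟨y.2, rfl⟩
    · intro z
      obtain ⟨x, hx⟩ := (huniq z).exists
      exact ⟨⟨x, hx.1⟩, hx.2⟩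
  set e : Dset ≃ ZHatS S := Equiv.ofBijective _ hgbij with he
  have hgcont : Continuous (fun x : Dset => f x.1) := hcont.comp continuous_subtype_val
  set homeo : Dset ≃ₜ ZHatS S := Continuous.homeoOfEquivCompactToT2 (f := e) hgcont with hhomeo
  have hs_eq : ∀ z, sfun z = ((homeo.symm z : Dset) : H) := by
    intro z
    have hmem : ((homeo.symm z : Dset) : H) ∈ Dset := (homeo.symm z).2
    have hfz : f ((homeo.symm z : Dset) : H) = z := homeo.apply_symm_apply z
    exact ((huniq z).unique ⟨hsfunD z, hsfunf z⟩ ⟨hmem, hfz⟩)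
  refine ⟨AddMonoidHom.mk' sfun hadd, ?_, fun z => hsfunf z⟩
  show Continuous sfun
  have : sfun = fun z => ((homeo.symm z : Dset) : H) := funext hs_eq
  rw [this]
  exact continuous_subtype_val.comp homeo.symm.continuous
end

section
/- Let p be a prime and f : H → Z_p a continuous surjection of profinite groups, where Z_p is the additive group of p-adic integers. Then f admits a continuous homomorphic section. -/
open Filter Topology

namespace PadicSectionAux

variable {p : ℕ} [hp : Fact p.Prime]

lemma isOpen_span_pow (k : ℕ) :
    IsOpen ((Ideal.span {(p : ℤ_[p]) ^ k} : Ideal ℤ_[p]) : Set ℤ_[p]) := by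
  have hset : ((Ideal.span {(p : ℤ_[p]) ^ k} : Ideal ℤ_[p]) : Set ℤ_[p])
      = {x : ℤ_[p] | ‖x‖ < (p : ℝ) ^ (-(k : ℤ) + 1)} := by
    ext x
    simp only [SetLike.mem_coe, Set.mem_setOf_eq]
    rw [← PadicInt.norm_le_pow_iff_mem_span_pow, PadicInt.norm_le_pow_iff_norm_lt_pow_add_one]
  rw [hset]
  exact isOpen_lt continuous_norm continuous_const

lemma intCast_mem_span_iff (k : ℤ) (n : ℕ) :
    ((k : ℤ_[p]) ∈ Ideal.span {(p : ℤ_[p]) ^ n}) ↔ (p : ℤ) ^ n ∣ k := by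
  rw [← PadicInt.norm_le_pow_iff_mem_span_pow, PadicInt.norm_int_le_pow_iff_dvd]

theorem aux (G : Type*) [AddCommGroup G] [TopologicalSpace G] [IsTopologicalAddGroup G]
    [CompactSpace G] [T2Space G] [TotallyDisconnectedSpace G]
    (φ : G →+ ℤ_[p]) (hφ : Continuous φ) (h : G) (hh : φ h = 1) :
    ∃ s : ℤ_[p] →+ G, Continuous s ∧ ∀ z, φ (s z) = z := by
  -- neighborhood basis of open subgroups
  have hbasis : ∀ V ∈ 𝓝 (0 : G), ∃ U : OpenAddSubgroup G, (U : Set G) ⊆ V := by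
    intro V hV
    obtain ⟨W, ⟨h0W, hWc⟩, hWV⟩ := (nhds_basis_clopen (0 : G)).mem_iff.mp hV
    obtain ⟨U, hU⟩ := IsTopologicalAddGroup.exist_openAddSubgroup_sub_clopen_nhds_of_zero hWc h0W
    exact ⟨U, hU.trans hWV⟩
  -- order of h modulo each open subgroup
  have key : ∀ U : OpenAddSubgroup G, ∃ N : ℕ, 0 < N ∧ ∀ n : ℤ, n • h ∈ U ↔ (N : ℤ) ∣ n := by
    intro U
    obtain ⟨g, hg⟩ := Int.subgroup_cyclic ((U.toAddSubgroup).comap (zmultiplesHom G h))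
    rw [← AddSubgroup.zmultiples_eq_closure] at hg
    have hmem : ∀ n : ℤ, n • h ∈ U ↔ n ∈ AddSubgroup.zmultiples g := by
      intro n
      have : (n • h ∈ U) ↔ n ∈ (U.toAddSubgroup).comap (zmultiplesHom G h) := by
        simp [AddSubgroup.mem_comap]
      rw [this, hg]
    have hg0 : g ≠ 0 := by
      intro hg0
      haveI : Finite (G ⧸ U.toAddSubgroup) :=
        AddSubgroup.quotient_finite_of_isOpen _ U.isOpen
      obtain ⟨a, b, hab, heq⟩ := Finite.exists_ne_map_eq_of_infinite
        (fun n : ℤ => ((n • h : G) : G ⧸ U.toAddSubgroup))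
      have hmem2 : (a - b) • h ∈ U := by
        have := (QuotientAddGroup.eq_iff_sub_mem).mp heq
        rwa [show a • h - b • h = (a - b) • h by rw [sub_zsmul]; abel] at this
      rw [hmem, hg0] at hmem2
      obtain ⟨k, hk⟩ := AddSubgroup.mem_zmultiples_iff.mp hmem2
      simp only [smul_zero] at hk
      exact hab (sub_eq_zero.mp hk.symm)
    refine ⟨g.natAbs, Int.natAbs_pos.mpr hg0, fun n => ?_⟩
    rw [hmem, AddSubgroup.mem_zmultiples_iff, Int.natAbs_dvd]
    constructor
    · rintro ⟨k, rfl⟩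
      exact Dvd.intro_left k rfl
    · rintro ⟨k, rfl⟩
      exact ⟨k, by simp [zsmul_eq_mul, mul_comm]⟩
  choose N hNpos hN using key
  set e : OpenAddSubgroup G → ℕ := fun U => (N U).factorization p with he
  set m : OpenAddSubgroup G → ℕ := fun U => ordCompl[p] (N U) with hm
  have hem : ∀ U, p ^ (e U) * m U = N U := fun U => Nat.ordProj_mul_ordCompl_eq_self (N U) p
  have hco : ∀ U, Nat.Coprime (p ^ e U) (m U) := fun U =>
    Nat.Coprime.pow_left _ (Nat.coprime_ordCompl hp.out (hNpos U).ne')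
  have hcex : ∀ U, ∃ c : ℕ, c ≡ 1 [MOD p ^ e U] ∧ c ≡ 0 [MOD m U] := fun U =>
    ⟨_, (Nat.chineseRemainder (hco U) 1 0).2⟩
  choose c hc1 hc0 using hcex
  have hNdvd : ∀ U W : OpenAddSubgroup G, W ≤ U → N U ∣ N W := by
    intro U W hWU
    have h1 : ((N W : ℤ)) • h ∈ U := hWU ((hN W _).mpr dvd_rfl)
    exact_mod_cast (hN U _).mp h1
  have hcdvd : ∀ U W : OpenAddSubgroup G, W ≤ U → (N U : ℤ) ∣ (c W : ℤ) - (c U : ℤ) := by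
    intro U W hWU
    have hNW0 : N W ≠ 0 := (hNpos W).ne'
    have h1 : (p : ℕ) ^ e U ∣ p ^ e W :=
      Nat.ordProj_dvd_ordProj_of_dvd hNW0 (hNdvd U W hWU) p
    have h2 : m U ∣ m W := Nat.ordCompl_dvd_ordCompl_of_dvd (hNdvd U W hWU) p
    have e1 : c U ≡ c W [MOD p ^ e U] := (hc1 U).trans ((hc1 W).of_dvd h1).symm
    have e2 : c U ≡ c W [MOD m U] := (hc0 U).trans ((hc0 W).of_dvd h2).symm
    have d1 : ((p ^ e U : ℕ) : ℤ) ∣ (c W : ℤ) - (c U : ℤ) := e1.dvd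
    have d2 : ((m U : ℕ) : ℤ) ∣ (c W : ℤ) - (c U : ℤ) := e2.dvd
    have hiso : IsCoprime ((p ^ e U : ℕ) : ℤ) ((m U : ℕ) : ℤ) :=
      Nat.isCoprime_iff_coprime.mpr (hco U)
    have := hiso.mul_dvd d1 d2
    rw [← Nat.cast_mul, hem U] at this
    exact this
  -- the coset sets
  set C : OpenAddSubgroup G → Set G := fun U => {g : G | g - (c U : ℤ) • h ∈ U} with hC
  have hCsub : ∀ U W : OpenAddSubgroup G, W ≤ U → C W ⊆ C U := by
    intro U W hWU g hg
    have h1 : ((c W : ℤ) - (c U : ℤ)) • h ∈ U := (hN U _).mpr (hcdvd U W hWU)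
    have h2 : g - (c U : ℤ) • h = (g - (c W : ℤ) • h) + ((c W : ℤ) - (c U : ℤ)) • h := by
      rw [sub_zsmul]; abel
    show g - (c U : ℤ) • h ∈ U
    rw [h2]
    exact U.toAddSubgroup.add_mem (hWU hg) h1
  have hCne : ∀ U, (C U).Nonempty := fun U => ⟨(c U : ℤ) • h, by simp only [hC, Set.mem_setOf_eq, sub_self]; exact zero_mem _⟩
  have hCclosed : ∀ U, IsClosed (C U) :=
    fun U => U.isClosed.preimage (continuous_id.sub continuous_const)
  obtain ⟨x, hx⟩ := IsCompact.nonempty_iInter_of_directed_nonempty_isCompact_isClosed C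
    (fun U V => ⟨U ⊓ V, hCsub U (U ⊓ V) inf_le_left, hCsub V (U ⊓ V) inf_le_right⟩)
    hCne (fun U => (hCclosed U).isCompact) hCclosed
  rw [Set.mem_iInter] at hx
  have hxU : ∀ U : OpenAddSubgroup G, x - (c U : ℤ) • h ∈ U := hx
  -- x is "pro-p"
  have hpow : ∀ U : OpenAddSubgroup G, ((p : ℤ) ^ e U) • x ∈ U := by
    intro U
    have hmc : (N U : ℤ) ∣ (p : ℤ) ^ e U * (c U : ℤ) := by
      have h1 : (m U : ℕ) ∣ c U := (Nat.modEq_zero_iff_dvd).mp (hc0 U)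
      have h2 : (N U : ℕ) ∣ p ^ e U * c U := by
        rw [← hem U]; exact mul_dvd_mul_left _ h1
      exact_mod_cast Int.natCast_dvd_natCast.mpr h2
    have h1 : ((p : ℤ) ^ e U * (c U : ℤ)) • h ∈ U := (hN U _).mpr hmc
    have h2 : ((p : ℤ) ^ e U) • (x - (c U : ℤ) • h) ∈ U := zsmul_mem (hxU U) _
    have h3 : ((p : ℤ) ^ e U) • x
        = ((p : ℤ) ^ e U) • (x - (c U : ℤ) • h) + ((p : ℤ) ^ e U * (c U : ℤ)) • h := by
      rw [mul_zsmul, smul_sub]; abel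
    rw [h3]
    exact U.toAddSubgroup.add_mem h2 h1
  -- φ x = 1
  have hp1 : (p : ℝ)⁻¹ < 1 := by
    rw [inv_lt_one_iff₀]
    right
    exact_mod_cast hp.out.one_lt
  have htend0 : Tendsto (fun k : ℕ => ((p : ℝ)⁻¹) ^ k) atTop (𝓝 0) :=
    tendsto_pow_atTop_nhds_zero_of_lt_one (by positivity) hp1
  have hφx : φ x = 1 := by
    have hker : ∀ k : ℕ, φ x - 1 ∈ Ideal.span {(p : ℤ_[p]) ^ k} := by
      intro k
      set I : Ideal ℤ_[p] := Ideal.span {(p : ℤ_[p]) ^ k} with hI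
      set U : OpenAddSubgroup G :=
        ⟨AddSubgroup.comap (φ : G →+ ℤ_[p]) I.toAddSubgroup, (isOpen_span_pow k).preimage hφ⟩
        with hUdef
      have hNk : (p : ℕ) ^ k ∣ N U := by
        have h1 : ((N U : ℤ)) • h ∈ U := (hN U _).mpr dvd_rfl
        have h2 : ((N U : ℤ) : ℤ_[p]) ∈ I := by
          have h3 : φ (((N U : ℤ)) • h) ∈ I := h1
          rwa [map_zsmul, hh, zsmul_one] at h3
        rw [intCast_mem_span_iff] at h2
        exact_mod_cast h2
      have hke : k ≤ e U :=
        (Nat.Prime.pow_dvd_iff_le_factorization hp.out (hNpos U).ne').mp hNk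
      have hcd : ((p : ℤ) ^ k) ∣ (c U : ℤ) - 1 := by
        have hd := (hc1 U).symm.dvd
        push_cast at hd
        exact dvd_trans (pow_dvd_pow _ hke) hd
      have hu : φ (x - (c U : ℤ) • h) ∈ I := hxU U
      have heq : φ x - 1 = φ (x - (c U : ℤ) • h) + (((c U : ℤ) - 1 : ℤ) : ℤ_[p]) := by
        rw [map_sub, map_zsmul, hh, zsmul_one]
        push_cast
        ring
      rw [heq]
      exact I.add_mem hu ((intCast_mem_span_iff _ _).mpr hcd)
    have hb : ∀ k : ℕ, ‖φ x - 1‖ ≤ ((p : ℝ)⁻¹) ^ k := by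
      intro k
      have h1 := (PadicInt.norm_le_pow_iff_mem_span_pow (φ x - 1) k).mpr (hker k)
      rwa [zpow_neg, zpow_natCast, ← inv_pow] at h1
    have h2 : ‖φ x - 1‖ ≤ 0 :=
      le_of_tendsto_of_tendsto' tendsto_const_nhds htend0 hb
    have h3 : φ x - 1 = 0 := norm_le_zero_iff.mp h2
    exact sub_eq_zero.mp h3
  -- sequences with p-power divisible coefficients tend to zero
  have hzero : ∀ b : ℕ → ℤ, (∀ n, (p : ℤ) ^ n ∣ b n) →
      Tendsto (fun n => b n • x) atTop (𝓝 (0 : G)) := by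
    intro b hb
    refine tendsto_def.mpr fun V hV => ?_
    obtain ⟨U, hU⟩ := hbasis V hV
    refine Filter.mem_of_superset (Filter.Ici_mem_atTop (e U)) fun n hn => ?_
    obtain ⟨t, ht⟩ := (pow_dvd_pow (p : ℤ) hn).trans (hb n)
    show b n • x ∈ V
    apply hU
    rw [ht, mul_comm, mul_zsmul]
    exact zsmul_mem (hpow U) t
  -- Cauchy-like sequences converge
  have hlim : ∀ a : ℕ → ℤ, (∀ m n : ℕ, m ≤ n → (p : ℤ) ^ m ∣ a n - a m) →
      ∃ y : G, Tendsto (fun n => a n • x) atTop (𝓝 y) := by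
    intro a ha
    obtain ⟨y, hy⟩ := exists_clusterPt_of_compactSpace (Filter.map (fun n => a n • x) atTop)
    refine ⟨y, tendsto_def.mpr fun V hV => ?_⟩
    have hV0 : (fun u : G => y + u) ⁻¹' V ∈ 𝓝 (0 : G) := by
      have hcont : Tendsto (fun u : G => y + u) (𝓝 0) (𝓝 y) := by
        exact (continuous_const.add continuous_id).tendsto' (0 : G) y (by simp)
      exact hcont hV
    obtain ⟨U, hU⟩ := hbasis _ hV0
    have hT : {g : G | g - y ∈ U} ∈ 𝓝 y := by
      have hop : IsOpen {g : G | g - y ∈ U} :=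
        U.isOpen.preimage (continuous_id.sub continuous_const)
      exact hop.mem_nhds (by simp)
    have hS : (fun n => a n • x) '' Set.Ici (e U) ∈ Filter.map (fun n => a n • x) atTop := by
      rw [Filter.mem_map]
      exact Filter.mem_of_superset (Filter.Ici_mem_atTop (e U)) (Set.subset_preimage_image _ _)
    obtain ⟨n₀, hn₀k, hn₀⟩ : ∃ n₀, e U ≤ n₀ ∧ a n₀ • x - y ∈ U := by
      obtain ⟨g, hg1, hg2⟩ := clusterPt_iff_nonempty.mp hy hT hS
      obtain ⟨n₀, hn₀, rfl⟩ := hg2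
      exact ⟨n₀, hn₀, hg1⟩
    refine Filter.mem_of_superset (Filter.Ici_mem_atTop (e U)) fun n hn => ?_
    show a n • x ∈ V
    have hd : ((p : ℤ) ^ e U) ∣ a n - a n₀ := by
      rcases le_total n₀ n with hle | hle
      · exact (pow_dvd_pow (p : ℤ) hn₀k).trans (ha n₀ n hle)
      · have hdd := (pow_dvd_pow (p : ℤ) hn).trans (ha n n₀ hle)
        have := hdd.neg_right
        rwa [neg_sub] at this
    have h1 : (a n - a n₀) • x ∈ U := by
      obtain ⟨t, ht⟩ := hd
      rw [ht, mul_comm, mul_zsmul]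
      exact zsmul_mem (hpow U) t
    have h2 : a n • x - y = ((a n - a n₀) • x) + (a n₀ • x - y) := by
      rw [sub_zsmul]; abel
    have hmem : a n • x - y ∈ U := by rw [h2]; exact U.toAddSubgroup.add_mem h1 hn₀
    have := hU hmem
    simpa using this
  -- divisibility of approximations
  have happr : ∀ (z : ℤ_[p]) (m' n : ℕ), m' ≤ n →
      (p : ℤ) ^ m' ∣ (z.appr n : ℤ) - (z.appr m' : ℤ) := by
    intro z m' n hmn
    rw [← intCast_mem_span_iff]
    have h1 := PadicInt.appr_spec m' z
    have h2 : z - z.appr n ∈ Ideal.span {(p : ℤ_[p]) ^ m'} :=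
      Ideal.span_singleton_le_span_singleton.mpr (pow_dvd_pow _ hmn) (PadicInt.appr_spec n z)
    have h3 : (((z.appr n : ℤ) - (z.appr m' : ℤ) : ℤ) : ℤ_[p])
        = (z - z.appr m') - (z - z.appr n) := by push_cast; ring
    rw [h3]
    exact sub_mem h1 h2
  -- define the section
  have hex : ∀ z : ℤ_[p], ∃ y, Tendsto (fun n => (z.appr n : ℤ) • x) atTop (𝓝 y) :=
    fun z => hlim _ (happr z)
  choose s0 hs0 using hex
  have hadd : ∀ z w : ℤ_[p], s0 (z + w) = s0 z + s0 w := by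
    intro z w
    have hb : ∀ n, (p : ℤ) ^ n ∣ (((z + w).appr n : ℤ) - ((z.appr n : ℤ) + (w.appr n : ℤ))) := by
      intro n
      rw [← intCast_mem_span_iff]
      have h1 := PadicInt.appr_spec n z
      have h2 := PadicInt.appr_spec n w
      have h3 := PadicInt.appr_spec n (z + w)
      have heq : (((((z + w).appr n : ℤ) - ((z.appr n : ℤ) + (w.appr n : ℤ))) : ℤ) : ℤ_[p])
          = (z - z.appr n) + (w - w.appr n) - ((z + w) - (z + w).appr n) := by push_cast; ring
      rw [heq]
      exact sub_mem (add_mem h1 h2) h3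
    have h1 : Tendsto (fun n => ((z.appr n : ℤ) + (w.appr n : ℤ)) • x) atTop
        (𝓝 (s0 z + s0 w)) := by
      simpa [add_zsmul] using (hs0 z).add (hs0 w)
    have h2 : Tendsto (fun n => ((z + w).appr n : ℤ) • x) atTop (𝓝 (s0 z + s0 w)) := by
      have h3 := h1.add (hzero _ hb)
      rw [add_zero] at h3
      refine h3.congr fun n => ?_
      rw [← add_zsmul]
      congr 1
      ring
    exact tendsto_nhds_unique (hs0 (z + w)) h2
  set s : ℤ_[p] →+ G := AddMonoidHom.mk' s0 hadd with hsdef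
  have hsec : ∀ z, φ (s0 z) = z := by
    intro z
    have h1 : Tendsto (fun n => φ ((z.appr n : ℤ) • x)) atTop (𝓝 (φ (s0 z))) :=
      (hφ.tendsto _).comp (hs0 z)
    have h1' : Tendsto (fun n => ((z.appr n : ℕ) : ℤ_[p])) atTop (𝓝 (φ (s0 z))) := by
      refine h1.congr fun n => ?_
      rw [map_zsmul, hφx, zsmul_one]
      push_cast
      ring
    have h2 : Tendsto (fun n => ((z.appr n : ℕ) : ℤ_[p])) atTop (𝓝 z) := by
      rw [tendsto_iff_norm_sub_tendsto_zero]
      refine squeeze_zero (fun n => norm_nonneg _) (fun n => ?_) htend0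
      have h3 := (PadicInt.norm_le_pow_iff_mem_span_pow (z - (z.appr n : ℤ_[p])) n).mpr
        (PadicInt.appr_spec n z)
      rw [norm_sub_rev] at h3
      rwa [zpow_neg, zpow_natCast, ← inv_pow] at h3
    exact tendsto_nhds_unique h1' h2
  have hcont : Continuous s := by
    apply continuous_of_continuousAt_zero s
    rw [ContinuousAt, map_zero]
    refine tendsto_def.mpr fun V hV => ?_
    obtain ⟨U, hU⟩ := hbasis V hV
    have hUx : ∀ z : ℤ_[p], z ∈ Ideal.span {(p : ℤ_[p]) ^ e U} → s0 z ∈ U := by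
      intro z hz
      refine U.isClosed.mem_of_tendsto (hs0 z) ?_
      refine Filter.eventually_atTop.mpr ⟨e U, fun n hn => ?_⟩
      have hd : (p : ℤ) ^ e U ∣ (z.appr n : ℤ) := by
        rw [← intCast_mem_span_iff]
        have h2 : z - z.appr n ∈ Ideal.span {(p : ℤ_[p]) ^ e U} :=
          Ideal.span_singleton_le_span_singleton.mpr (pow_dvd_pow _ hn) (PadicInt.appr_spec n z)
        have h3 : (((z.appr n : ℤ)) : ℤ_[p]) = z - (z - z.appr n) := by push_cast; ring
        rw [h3]
        exact sub_mem hz h2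
      obtain ⟨t, ht⟩ := hd
      show (z.appr n : ℤ) • x ∈ (U : Set G)
      rw [ht, mul_comm, mul_zsmul]
      exact zsmul_mem (hpow U) t
    refine Filter.mem_of_superset
      ((isOpen_span_pow (e U)).mem_nhds ?_) (fun z hz => hU (hUx z hz))
    simp
  exact ⟨s, hcont, hsec⟩

end PadicSectionAux

/-- Every continuous surjection from a profinite group onto the additive group `ℤ_p` of
`p`-adic integers admits a continuous homomorphic section. -/
theorem continuous_section_of_surjection_onto_padicInt
    (p : ℕ) [Fact p.Prime]
    (H : Type*) [AddGroup H] [TopologicalSpace H] [IsTopologicalAddGroup H]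
    [CompactSpace H] [T2Space H] [TotallyDisconnectedSpace H]
    (f : H →+ PadicInt p) (hf : Continuous f) (hsurj : Function.Surjective f) :
    ∃ s : PadicInt p →+ H, Continuous s ∧ ∀ z, f (s z) = z := by
  obtain ⟨h, hh⟩ := hsurj 1
  set K : AddSubgroup H := (AddSubgroup.zmultiples h).topologicalClosure with hK
  have hcomm : ∀ a b : (AddSubgroup.zmultiples h), a + b = b + a := by
    rintro ⟨a, ha⟩ ⟨b, hb⟩
    obtain ⟨n, rfl⟩ := AddSubgroup.mem_zmultiples_iff.mp ha
    obtain ⟨m, rfl⟩ := AddSubgroup.mem_zmultiples_iff.mp hb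
    apply Subtype.ext
    show n • h + m • h = m • h + n • h
    rw [← add_zsmul, ← add_zsmul, add_comm]
  letI : AddCommGroup K := AddSubgroup.addCommGroupTopologicalClosure _ hcomm
  haveI : CompactSpace K := isCompact_iff_compactSpace.mp
    ((AddSubgroup.isClosed_topologicalClosure _).isCompact)
  have hhK : h ∈ K := AddSubgroup.le_topologicalClosure _ (AddSubgroup.mem_zmultiples h)
  set φ : K →+ PadicInt p := f.comp K.subtype with hφdef
  have hφc : Continuous φ := hf.comp continuous_subtype_val
  obtain ⟨s0, hs0c, hs0⟩ := PadicSectionAux.aux K φ hφc ⟨h, hhK⟩ (by simpa [hφdef] using hh)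
  refine ⟨(K.subtype).comp s0, continuous_subtype_val.comp hs0c, fun z => ?_⟩
  simpa [hφdef] using hs0 z
end

section
/- Suppose R is a constructible set over F_q whose zeta function Z(R,T) = exp(Σ_{n≥1} #R(F_{q^n}) T^n / n) is rational, and suppose there is a polynomial P with rational coefficients such that #R(F_{q^n}) = P(q^n) for all n ≥ 1. Then P has integer coefficients. -/
open PowerSeries


variable {K : Type*} [Field K]

lemma geom_aux (r : K) (hr : r ≠ 0) :
    ((Polynomial.X - Polynomial.C r : Polynomial K) : K⟦X⟧)
      * PowerSeries.mk (fun n => -(r⁻¹)^(n+1)) = 1 := by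
  have h : ((Polynomial.X - Polynomial.C r : Polynomial K) : K⟦X⟧)
      = PowerSeries.X - PowerSeries.C r := by
    push_cast; ring_nf
  rw [h]
  ext n
  cases n with
  | zero => simp [PowerSeries.coeff_mul, pow_one, hr]
  | succ n =>
    rw [sub_mul]
    simp [PowerSeries.coeff_succ_X_mul, pow_succ, hr,
      PowerSeries.coeff_mk, PowerSeries.coeff_one]
    field_simp
    ring

lemma logderiv_prod (s : Multiset K) (hs : (0 : K) ∉ s) :
    ((Polynomial.derivative ((s.map (fun r => Polynomial.X - Polynomial.C r)).prod) : Polynomial K) : K⟦X⟧)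
      = (((s.map (fun r => Polynomial.X - Polynomial.C r)).prod : Polynomial K) : K⟦X⟧)
        * PowerSeries.mk (fun n => - (s.map (fun r => (r⁻¹)^(n+1))).sum) := by
  induction s using Multiset.induction_on with
  | empty => ext n; simp
  | cons r s ih =>
    have hr : r ≠ 0 := fun h => hs (h ▸ Multiset.mem_cons_self r s)
    have hs' : (0 : K) ∉ s := fun h => hs (Multiset.mem_cons_of_mem h)
    have hgeo := geom_aux r hr
    simp only [Multiset.map_cons, Multiset.prod_cons, Polynomial.derivative_mul,
      Polynomial.derivative_sub, Polynomial.derivative_X, Polynomial.derivative_C, sub_zero,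
      one_mul, Polynomial.coe_add, Polynomial.coe_mul]
    rw [ih hs']
    have hcons : (PowerSeries.mk fun n =>
          -(((r⁻¹)^(n+1)) ::ₘ (s.map (fun r => (r⁻¹)^(n+1)))).sum : K⟦X⟧)
        = PowerSeries.mk (fun n => -(s.map (fun r => (r⁻¹)^(n+1))).sum)
          + PowerSeries.mk (fun n => -(r⁻¹)^(n+1)) := by
      ext n; simp [Multiset.sum_cons]; try ring
    rw [hcons]
    linear_combination -
      (((s.map (fun r => Polynomial.X - Polynomial.C r)).prod : Polynomial K) : K⟦X⟧) * hgeo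

lemma logderiv_poly {K : Type*} [Field K] [IsAlgClosed K] (h : Polynomial K)
    (h0 : h.eval 0 ≠ 0) :
    ((Polynomial.derivative h : Polynomial K) : K⟦X⟧)
      = (h : K⟦X⟧) * PowerSeries.mk (fun n => -(h.roots.map (fun r => (r⁻¹)^(n+1))).sum) := by
  have hne : h ≠ 0 := fun hh => h0 (by simp [hh])
  have hsplit : h.Splits := IsAlgClosed.splits h
  have heq := hsplit.eq_prod_roots
  have hroots0 : (0 : K) ∉ h.roots := by
    intro hmem
    exact h0 ((Polynomial.mem_roots hne).1 hmem)
  calc ((Polynomial.derivative h : Polynomial K) : K⟦X⟧)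
      = ((Polynomial.C h.leadingCoeff *
          Polynomial.derivative ((h.roots.map (fun r => Polynomial.X - Polynomial.C r)).prod)
            : Polynomial K) : K⟦X⟧) := by
        conv_lhs => rw [heq]
        rw [Polynomial.derivative_C_mul]
    _ = _ := by
        rw [Polynomial.coe_mul, logderiv_prod _ hroots0]
        conv_rhs => lhs; rw [heq, Polynomial.coe_mul]
        ring

lemma indep_powers {K : Type*} [Field K] (s : Finset K) (hs : ∀ x ∈ s, x ≠ 0)
    (d : K → K) (h : ∀ m : ℕ, 1 ≤ m → ∑ x ∈ s, d x * x ^ m = 0) :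
    ∀ x ∈ s, d x = 0 := by
  classical
  induction s using Finset.induction_on generalizing d with
  | empty => intro x hx; simp at hx
  | @insert a s ha ih =>
    have hs' : ∀ x ∈ s, x ≠ 0 := fun x hx => hs x (Finset.mem_insert_of_mem hx)
    have key : ∀ x ∈ s, d x * (x - a) = 0 := by
      apply ih hs' (fun x => d x * (x - a))
      intro m hm
      have h1 := h m hm
      have h2 := h (m + 1) (le_trans hm (Nat.le_succ m))
      rw [Finset.sum_insert ha] at h1 h2
      have : ∑ x ∈ s, d x * (x - a) * x ^ m
          = (d a * a ^ (m+1) + ∑ x ∈ s, d x * x ^ (m+1))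
            - a * (d a * a ^ m + ∑ x ∈ s, d x * x ^ m) := by
        rw [mul_add, Finset.mul_sum, add_sub_add_comm]
        have hA : d a * a ^ (m + 1) - a * (d a * a ^ m) = 0 := by ring
        rw [hA, zero_add, ← Finset.sum_sub_distrib]
        exact Finset.sum_congr rfl fun x hx => by ring
      rw [this, h1, h2, mul_zero, sub_zero]
    have hds : ∀ x ∈ s, d x = 0 := by
      intro x hx
      rcases mul_eq_zero.1 (key x hx) with h' | h'
      · exact h'
      · exact absurd (sub_eq_zero.1 h' ▸ hx) ha
    intro x hx
    rcases Finset.mem_insert.1 hx with rfl | hx'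
    · have h1 := h 1 le_rfl
      rw [Finset.sum_insert ha] at h1
      rw [Finset.sum_eq_zero (fun y hy => by rw [hds y hy, zero_mul]), add_zero, pow_one] at h1
      exact (mul_eq_zero.1 h1).resolve_right (hs x (Finset.mem_insert_self x s))
    · exact hds x hx'

lemma exists_good_frac (Z : ℚ⟦X⟧) (hZ0 : constantCoeff Z = 1)
    (hrat : ∃ f g : Polynomial ℚ, g ≠ 0 ∧ Z * (g : ℚ⟦X⟧) = (f : ℚ⟦X⟧)) :
    ∃ f g : Polynomial ℚ, f.eval 0 ≠ 0 ∧ g.eval 0 ≠ 0 ∧ Z * (g : ℚ⟦X⟧) = (f : ℚ⟦X⟧) := by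
  obtain ⟨f, g, hg, hfg⟩ := hrat
  have hZne : Z ≠ 0 := fun h => by simp [h] at hZ0
  have hf : f ≠ 0 := by
    intro h
    rw [h, Polynomial.coe_zero, mul_eq_zero] at hfg
    rcases hfg with h' | h'
    · exact hZne h'
    · exact hg (Polynomial.coe_eq_zero_iff.1 h')
  have hZu : IsUnit Z := by
    rw [PowerSeries.isUnit_iff_constantCoeff, hZ0]; exact isUnit_one
  obtain ⟨u, hu⟩ := hZu
  -- divisibility both ways in power series
  have hdvd_gf : (g : ℚ⟦X⟧) ∣ (f : ℚ⟦X⟧) := ⟨Z, by rw [← hfg]; ring⟩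
  have hdvd_fg : (f : ℚ⟦X⟧) ∣ (g : ℚ⟦X⟧) := by
    refine ⟨(↑u⁻¹ : ℚ⟦X⟧), ?_⟩
    rw [← hfg, ← hu]
    have h5 : (↑u * ↑g : ℚ⟦X⟧) * ↑u⁻¹ = ↑g * (↑u * ↑u⁻¹) := by ring
    rw [h5, Units.mul_inv, mul_one]
  -- transfer of X-power divisibility
  have key : ∀ (p r : Polynomial ℚ), r ≠ 0 → (p : ℚ⟦X⟧) ∣ (r : ℚ⟦X⟧) →
      ∀ k : ℕ, (Polynomial.X : Polynomial ℚ)^k ∣ p → k ≤ r.rootMultiplicity 0 := by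
    intro p r hr hpr k hkp
    have h1 : (PowerSeries.X : ℚ⟦X⟧)^k ∣ (p : ℚ⟦X⟧) := by
      have := map_dvd (Polynomial.coeToPowerSeries.ringHom (R := ℚ)) hkp
      simpa using this
    have h2 : (PowerSeries.X : ℚ⟦X⟧)^k ∣ (r : ℚ⟦X⟧) := dvd_trans h1 hpr
    have h3 : ∀ i < k, r.coeff i = 0 := by
      intro i hi
      have := (PowerSeries.X_pow_dvd_iff.1 h2) i hi
      rwa [Polynomial.coeff_coe] at this
    have h4 : (Polynomial.X : Polynomial ℚ)^k ∣ r := Polynomial.X_pow_dvd_iff.2 h3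
    rw [(Polynomial.le_rootMultiplicity_iff hr : _ ↔ (Polynomial.X - Polynomial.C 0)^k ∣ r)]
    simpa using h4
  have hab : f.rootMultiplicity 0 = g.rootMultiplicity 0 := by
    apply le_antisymm
    · apply key f g hg hdvd_fg
      simpa using Polynomial.pow_rootMultiplicity_dvd f 0
    · apply key g f hf hdvd_gf
      simpa using Polynomial.pow_rootMultiplicity_dvd g 0
  obtain ⟨f₁, hf₁, hf₁nd⟩ := f.exists_eq_pow_rootMultiplicity_mul_and_not_dvd hf 0
  obtain ⟨g₁, hg₁, hg₁nd⟩ := g.exists_eq_pow_rootMultiplicity_mul_and_not_dvd hg 0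
  rw [map_zero, sub_zero] at hf₁ hg₁ hf₁nd hg₁nd
  refine ⟨f₁, g₁, ?_, ?_, ?_⟩
  · intro h
    exact hf₁nd (Polynomial.X_dvd_iff.2 (by rwa [Polynomial.coeff_zero_eq_eval_zero]))
  · intro h
    exact hg₁nd (Polynomial.X_dvd_iff.2 (by rwa [Polynomial.coeff_zero_eq_eval_zero]))
  · set a := f.rootMultiplicity 0 with ha
    rw [hf₁, hg₁, ← hab] at hfg
    push_cast at hfg
    have hXa : ((PowerSeries.X : ℚ⟦X⟧))^a ≠ 0 := pow_ne_zero _ PowerSeries.X_ne_zero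
    apply mul_left_cancel₀ hXa
    calc (PowerSeries.X:ℚ⟦X⟧)^a * (Z * ↑g₁) = Z * ((PowerSeries.X:ℚ⟦X⟧)^a * ↑g₁) := by ring
      _ = (PowerSeries.X:ℚ⟦X⟧)^a * ↑f₁ := by rw [hfg]


lemma coe_powerseries_map (p : Polynomial ℚ) :
    (PowerSeries.map (algebraMap ℚ ℂ)) (p : ℚ⟦X⟧)
      = ((p.map (algebraMap ℚ ℂ) : Polynomial ℂ) : ℂ⟦X⟧) := by
  ext n
  simp [Polynomial.coeff_coe, PowerSeries.coeff_map]

lemma exists_multisets (N : ℕ → ℕ) (Z : ℚ⟦X⟧)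
    (hZ0 : constantCoeff Z = 1)
    (hZexp : Z.derivativeFun = Z * PowerSeries.mk fun n => (N (n + 1) : ℚ))
    (hrat : ∃ f g : Polynomial ℚ, g ≠ 0 ∧ Z * (g : ℚ⟦X⟧) = (f : ℚ⟦X⟧)) :
    ∃ A B : Multiset ℂ, (0 : ℂ) ∉ A ∧ (0 : ℂ) ∉ B ∧ ∀ m : ℕ, 1 ≤ m →
      (N m : ℂ) = (B.map (fun b => b^m)).sum - (A.map (fun a => a^m)).sum := by
  obtain ⟨f, g, hf0, hg0, hfg⟩ := exists_good_frac Z hZ0 hrat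
  set S : ℚ⟦X⟧ := PowerSeries.mk fun n => (N (n + 1) : ℚ) with hS
  -- derivative of both sides of Z*g = f
  have E1 : Z * S * (g : ℚ⟦X⟧) + Z * ((Polynomial.derivative g : Polynomial ℚ) : ℚ⟦X⟧)
      = ((Polynomial.derivative f : Polynomial ℚ) : ℚ⟦X⟧) := by
    have := congrArg PowerSeries.derivativeFun hfg
    rw [PowerSeries.derivativeFun_mul,
      (@id (PowerSeries.derivativeFun (g : ℚ⟦X⟧) = ((Polynomial.derivative g : Polynomial ℚ) : ℚ⟦X⟧))
        (PowerSeries.derivative_coe g)),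
      (@id (PowerSeries.derivativeFun (f : ℚ⟦X⟧) = ((Polynomial.derivative f : Polynomial ℚ) : ℚ⟦X⟧))
        (PowerSeries.derivative_coe f)), hZexp, smul_eq_mul, smul_eq_mul] at this
    linear_combination this
  have keyQ : S * ((f : ℚ⟦X⟧) * (g : ℚ⟦X⟧))
      = ((Polynomial.derivative f : Polynomial ℚ) : ℚ⟦X⟧) * (g : ℚ⟦X⟧)
        - (f : ℚ⟦X⟧) * ((Polynomial.derivative g : Polynomial ℚ) : ℚ⟦X⟧) := by
    linear_combination (-(S * (g:ℚ⟦X⟧) + ((Polynomial.derivative g : Polynomial ℚ) : ℚ⟦X⟧))) * hfg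
      + (g : ℚ⟦X⟧) * E1
  -- map to ℂ
  set ψ := algebraMap ℚ ℂ with hψ
  set F := f.map ψ with hF
  set G := g.map ψ with hG
  set Sc : ℂ⟦X⟧ := PowerSeries.mk fun n => (N (n + 1) : ℂ) with hSc
  have hmapS : (PowerSeries.map ψ) S = Sc := by
    ext n; simp [hS, hSc, PowerSeries.coeff_map]
  have keyC : Sc * ((F : ℂ⟦X⟧) * (G : ℂ⟦X⟧))
      = ((Polynomial.derivative F : Polynomial ℂ) : ℂ⟦X⟧) * (G : ℂ⟦X⟧)
        - (F : ℂ⟦X⟧) * ((Polynomial.derivative G : Polynomial ℂ) : ℂ⟦X⟧) := by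
    have := congrArg (PowerSeries.map ψ) keyQ
    rw [map_mul, map_mul, map_sub, map_mul, map_mul, hmapS] at this
    rw [coe_powerseries_map, coe_powerseries_map, coe_powerseries_map, coe_powerseries_map]
      at this
    rwa [← Polynomial.derivative_map, ← Polynomial.derivative_map, ← hF, ← hG] at this
  have hF0 : F.eval 0 ≠ 0 := by
    rw [hF, Polynomial.eval_zero_map]
    simpa using hf0
  have hG0 : G.eval 0 ≠ 0 := by
    rw [hG, Polynomial.eval_zero_map]
    simpa using hg0
  have hFne : (F : ℂ⟦X⟧) ≠ 0 := by
    rw [Ne, Polynomial.coe_eq_zero_iff]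
    intro h; exact hF0 (by simp [h])
  have hGne : (G : ℂ⟦X⟧) ≠ 0 := by
    rw [Ne, Polynomial.coe_eq_zero_iff]
    intro h; exact hG0 (by simp [h])
  have hSeq : Sc = PowerSeries.mk (fun n => -(F.roots.map (fun r => (r⁻¹)^(n+1))).sum)
      - PowerSeries.mk (fun n => -(G.roots.map (fun r => (r⁻¹)^(n+1))).sum) := by
    apply mul_right_cancel₀ (mul_ne_zero hFne hGne)
    rw [keyC, logderiv_poly F hF0, logderiv_poly G hG0]
    ring
  refine ⟨F.roots.map (·⁻¹), G.roots.map (·⁻¹), ?_, ?_, ?_⟩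
  · intro h
    obtain ⟨r, hr, hr0⟩ := Multiset.mem_map.1 h
    have : r = 0 := by simpa using _root_.inv_eq_zero.1 hr0
    subst this
    have hFne' : F ≠ 0 := fun h => hF0 (by simp [h])
    exact hF0 ((Polynomial.mem_roots hFne').1 hr)
  · intro h
    obtain ⟨r, hr, hr0⟩ := Multiset.mem_map.1 h
    have : r = 0 := by simpa using _root_.inv_eq_zero.1 hr0
    subst this
    have hGne' : G ≠ 0 := fun h => hG0 (by simp [h])
    exact hG0 ((Polynomial.mem_roots hGne').1 hr)
  · intro m hm
    obtain ⟨n, rfl⟩ : ∃ n, m = n + 1 := ⟨m - 1, (Nat.succ_pred_eq_of_pos hm).symm⟩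
    have := congrArg (PowerSeries.coeff n) hSeq
    rw [hSc] at this
    simp only [PowerSeries.coeff_mk, map_sub, PowerSeries.coeff_mk] at this
    rw [this]
    rw [Multiset.map_map, Multiset.map_map]
    simp only [Function.comp]
    ring

/-- Katz's integrality argument: suppose `R` is a constructible set over `F_q` whose
zeta function `Z(R,T) = exp(Σ_{n≥1} #R(F_{q^n}) T^n / n)` (characterized by `Z(0) = 1`
and `Z' = Z · Σ_{n≥1} #R(F_{q^n}) T^{n-1}`) is a rational function, and that there is a
polynomial `P ∈ ℚ[T]` with `#R(F_{q^n}) = P(q^n)` for all `n ≥ 1`.  Then `P` has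
integer coefficients. -/
theorem integral_coeffs_of_rational_zeta
    (q : ℕ) (hq : ∃ p k : ℕ, p.Prime ∧ 0 < k ∧ q = p ^ k)
    (N : ℕ → ℕ) (P : Polynomial ℚ)
    (hP : ∀ n : ℕ, 1 ≤ n → (N n : ℚ) = P.eval ((q : ℚ) ^ n))
    (Z : PowerSeries ℚ)
    (hZ0 : PowerSeries.constantCoeff Z = 1)
    (hZexp : Z.derivativeFun = Z * PowerSeries.mk fun n => (N (n + 1) : ℚ))
    (hrat : ∃ f g : Polynomial ℚ, g ≠ 0 ∧ Z * (g : PowerSeries ℚ) = (f : PowerSeries ℚ)) :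
    ∀ i, ∃ m : ℤ, P.coeff i = (m : ℚ) := by
  classical
  intro i
  obtain ⟨p, k, hp, hk, he⟩ := hq
  have hq2 : 2 ≤ q := he ▸ Nat.one_lt_pow hk.ne' hp.one_lt
  have hqC : (q : ℂ) ≠ 0 := Nat.cast_ne_zero.2 (by omega)
  obtain ⟨A, B, hA, hB, hN⟩ := exists_multisets N Z hZ0 hZexp hrat
  by_cases hi : i ∈ P.support
  swap
  · exact ⟨0, by simpa using Polynomial.notMem_support_iff.1 hi⟩
  set s : Finset ℂ := (P.support.image fun j => (q:ℂ)^j) ∪ A.toFinset ∪ B.toFinset with hs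
  set d : ℂ → ℂ := fun x =>
    (∑ j ∈ P.support, if (q:ℂ)^j = x then (P.coeff j : ℂ) else 0)
      + (A.count x : ℂ) - (B.count x : ℂ) with hd
  have hs0 : ∀ x ∈ s, x ≠ 0 := by
    intro x hx
    rw [hs] at hx
    rcases Finset.mem_union.1 hx with hx' | hx'
    · rcases Finset.mem_union.1 hx' with hx'' | hx''
      · obtain ⟨j, _, rfl⟩ := Finset.mem_image.1 hx''
        exact pow_ne_zero _ hqC
      · intro h0; exact hA (h0 ▸ Multiset.mem_toFinset.1 hx'')
    · intro h0; exact hB (h0 ▸ Multiset.mem_toFinset.1 hx')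
  -- the evaluation of P as a support sum
  have hev : ∀ m : ℕ, 1 ≤ m →
      (N m : ℂ) = ∑ j ∈ P.support, (P.coeff j : ℂ) * ((q:ℂ)^j)^m := by
    intro m hm
    have h1 : ((N m : ℚ) : ℂ) = ((P.eval ((q : ℚ) ^ m) : ℚ) : ℂ) := by rw [hP m hm]
    have h2 : ((P.eval ((q : ℚ) ^ m) : ℚ) : ℂ)
        = Polynomial.eval₂ (algebraMap ℚ ℂ) ((q:ℂ)^m) P := by
      have h3 := Polynomial.eval₂_at_apply (p := P) (algebraMap ℚ ℂ) ((q : ℚ)^m)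
      have h4 : (algebraMap ℚ ℂ) ((q:ℚ)^m) = (q:ℂ)^m := by push_cast [eq_ratCast]; ring
      rw [h4] at h3
      rw [h3, eq_ratCast]
    rw [show ((N m : ℚ) : ℂ) = (N m : ℂ) by push_cast; ring] at h1
    rw [h1, h2, Polynomial.eval₂_eq_sum, Polynomial.sum_def]
    apply Finset.sum_congr rfl
    intro j hj
    rw [eq_ratCast, ← pow_mul, mul_comm m j, pow_mul]
  have hzero : ∀ m : ℕ, 1 ≤ m → ∑ x ∈ s, d x * x ^ m = 0 := by
    intro m hm
    have hsplit : ∑ x ∈ s, d x * x ^ m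
        = (∑ x ∈ s, (∑ j ∈ P.support, if (q:ℂ)^j = x then (P.coeff j : ℂ) else 0) * x^m)
          + (∑ x ∈ s, (A.count x : ℂ) * x^m) - (∑ x ∈ s, (B.count x : ℂ) * x^m) := by
      simp only [hd, add_mul, sub_mul, Finset.sum_add_distrib, Finset.sum_sub_distrib]
    have hT1 : (∑ x ∈ s, (∑ j ∈ P.support, if (q:ℂ)^j = x then (P.coeff j : ℂ) else 0) * x^m)
        = (N m : ℂ) := by
      rw [hev m hm]
      simp_rw [Finset.sum_mul]
      rw [Finset.sum_comm]
      apply Finset.sum_congr rfl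
      intro j hj
      have hmem : (q:ℂ)^j ∈ s := by
        rw [hs]
        exact Finset.mem_union_left _ (Finset.mem_union_left _ (Finset.mem_image_of_mem _ hj))
      simp only [ite_mul, zero_mul]
      rw [Finset.sum_ite_eq s ((q:ℂ)^j) (fun x => (P.coeff j : ℂ) * x^m), if_pos hmem]
    have hT2 : (∑ x ∈ s, (A.count x : ℂ) * x^m) = (A.map (fun a => a^m)).sum := by
      rw [Finset.sum_multiset_map_count A (fun a => a^m)]
      rw [← Finset.sum_subset (show A.toFinset ⊆ s from by
        rw [hs]; intro x hx
        exact Finset.mem_union_left _ (Finset.mem_union_right _ hx))]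
      · apply Finset.sum_congr rfl
        intro x hx
        rw [nsmul_eq_mul]
      · intro x hx hnx
        rw [Multiset.count_eq_zero_of_notMem (fun hmm => hnx (Multiset.mem_toFinset.2 hmm))]
        simp
    have hT3 : (∑ x ∈ s, (B.count x : ℂ) * x^m) = (B.map (fun b => b^m)).sum := by
      rw [Finset.sum_multiset_map_count B (fun b => b^m)]
      rw [← Finset.sum_subset (show B.toFinset ⊆ s from by
        rw [hs]; intro x hx
        exact Finset.mem_union_right _ hx)]
      · apply Finset.sum_congr rfl
        intro x hx
        rw [nsmul_eq_mul]
      · intro x hx hnx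
        rw [Multiset.count_eq_zero_of_notMem (fun hmm => hnx (Multiset.mem_toFinset.2 hmm))]
        simp
    rw [hsplit, hT1, hT2, hT3, hN m hm]
    ring
  have hdz := indep_powers s hs0 d hzero
  have hmemi : (q:ℂ)^i ∈ s := by
    rw [hs]
    exact Finset.mem_union_left _ (Finset.mem_union_left _ (Finset.mem_image_of_mem _ hi))
  have hdi := hdz ((q:ℂ)^i) hmemi
  rw [hd] at hdi
  simp only at hdi
  have hsum : (∑ j ∈ P.support, if (q:ℂ)^j = (q:ℂ)^i then (P.coeff j : ℂ) else 0)
      = (P.coeff i : ℂ) := by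
    rw [Finset.sum_eq_single_of_mem i hi]
    · rw [if_pos rfl]
    · intro j hj hne
      rw [if_neg]
      intro heq
      apply hne
      have hnat : ((q^j : ℕ) : ℂ) = ((q^i : ℕ) : ℂ) := by push_cast; exact heq
      exact Nat.pow_right_injective hq2 (Nat.cast_injective hnat)
  rw [hsum] at hdi
  refine ⟨(B.count ((q:ℂ)^i) : ℤ) - (A.count ((q:ℂ)^i) : ℤ), ?_⟩
  have : ((P.coeff i : ℚ) : ℂ)
      = (((((B.count ((q:ℂ)^i) : ℤ) - (A.count ((q:ℂ)^i) : ℤ)) : ℤ) : ℚ) : ℂ) := by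
    push_cast
    linear_combination hdi
  exact_mod_cast this
end
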